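/- arXiv:1908.11360 — 2 statements merged into one kernel-verified Lean document; each statement's English description precedes it below -/
import Mathlib

section
/- For all n, m ∈ ℕ with m ≥ 1, every set Γ of L^m-formulas and every formula φ ∈ L^m: Γ ⊢_{Ldm_n^m} φ if and only if Γ ⊩ φ (soundness and completeness of the Hilbert calculus Ldm_n^m with respect to Ldm_n^m-models). -/
namespace Stit

/-- Formulas of the language `L^m` (negation normal form), with agents `Fin m`
and propositional variables indexed by `ℕ`. -/
inductive Fml (m : ℕ) : Type
  | pos : ℕ → Fml m                  -- p
  | neg : ℕ → Fml m                  -- p̄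
  | and : Fml m → Fml m → Fml m      -- φ ∧ ψ
  | or  : Fml m → Fml m → Fml m      -- φ ∨ ψ
  | box : Fml m → Fml m              -- □φ
  | dia : Fml m → Fml m              -- ◇φ
  | ag  : Fin m → Fml m → Fml m      -- [i]φ
  | dag : Fin m → Fml m → Fml m      -- ⟨i⟩φ

namespace Fml

/-- Negation `φ̄`: replace every connective/modality by its dual and swap `p` with `p̄`. -/
def negF {m : ℕ} : Fml m → Fml m
  | pos p => neg p
  | neg p => pos p
  | and φ ψ => or φ.negF ψ.negF
  | or φ ψ => and φ.negF ψ.negF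
  | box φ => dia φ.negF
  | dia φ => box φ.negF
  | ag i φ => dag i φ.negF
  | dag i φ => ag i φ.negF

/-- `φ → ψ` abbreviates `φ̄ ∨ ψ`. -/
def impF {m : ℕ} (φ ψ : Fml m) : Fml m := or φ.negF ψ

end Fml

/-- `f 0 ∧ f 1 ∧ ⋯ ∧ f k` (left-associated). -/
def conjUpTo {m : ℕ} (f : ℕ → Fml m) : ℕ → Fml m
  | 0 => f 0
  | k+1 => Fml.and (conjUpTo f k) (f (k+1))

/-- `f 0 ∨ f 1 ∨ ⋯ ∨ f k` (left-associated). -/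
def disjUpTo {m : ℕ} (f : ℕ → Fml m) : ℕ → Fml m
  | 0 => f 0
  | k+1 => Fml.or (disjUpTo f k) (f (k+1))

/-- `(f 0)̄ ∧ ((f 1)̄ ∧ ⋯ ((f (j-1))̄ ∧ base))`. -/
def prefNegConj {m : ℕ} (f : ℕ → Fml m) : ℕ → Fml m → Fml m
  | 0, base => base
  | j+1, base => prefNegConj f j (Fml.and (f j).negF base)

/-- The antecedent `◇[i]φ_0 ∧ ◇(φ̄_0 ∧ [i]φ_1) ∧ ⋯ ∧ ◇(φ̄_0 ∧ ⋯ ∧ φ̄_{n'-1} ∧ [i]φ_{n'})`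
of the (n'+1)-choice axiom. -/
def apcAnte {m : ℕ} (i : Fin m) (f : ℕ → Fml m) (n' : ℕ) : Fml m :=
  conjUpTo (fun j => Fml.dia (prefNegConj f j (Fml.ag i (f j)))) n'

/-- The n-choice axiom `APC_n^i` for `n = n' + 1` choices `φ_0, …, φ_{n'}`. -/
def apcAx {m : ℕ} (i : Fin m) (f : ℕ → Fml m) (n' : ℕ) : Fml m :=
  (apcAnte i f n').impF (disjUpTo f n')

def diaAgIdx {m : ℕ} (f : Fin m → Fml m) (j : ℕ) : Fml m :=
  if h : j < m then Fml.dia (Fml.ag ⟨j, h⟩ (f ⟨j, h⟩)) else Fml.pos 0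

def agIdx {m : ℕ} (f : Fin m → Fml m) (j : ℕ) : Fml m :=
  if h : j < m then Fml.ag ⟨j, h⟩ (f ⟨j, h⟩) else Fml.pos 0

/-- The independence-of-agents axiom `⋀_{i∈Ag} ◇[i]φ_i → ◇(⋀_{i∈Ag} [i]φ_i)`
(for `m ≥ 1` agents). -/
def ioaAx {m : ℕ} (f : Fin m → Fml m) : Fml m :=
  (conjUpTo (diaAgIdx f) (m-1)).impF (Fml.dia (conjUpTo (agIdx f) (m-1)))

/-- An `Ldm_n^m`-model on the carrier `W`: each `rel i` is an equivalence relation (C1),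
independence of agents (C2), the `n`-choice condition when `n > 0` (C3), plus a valuation. -/
structure ModelOn (n m : ℕ) (W : Type) : Type where
  nonemp : Nonempty W
  rel : Fin m → W → W → Prop
  refl : ∀ i w, rel i w w
  symm : ∀ i w u, rel i w u → rel i u w
  trans : ∀ i w u v, rel i w u → rel i u v → rel i w v
  ioa : ∀ u : Fin m → W, ∃ v, ∀ i, rel i (u i) v
  apc : 0 < n → ∀ (i : Fin m) (w : Fin (n+1) → W),
      ∃ k j : Fin (n+1), k < j ∧ rel i (w k) (w j)
  val : ℕ → Set W

/-- Satisfaction `M, w ⊩ φ`. -/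
def Sat {n m : ℕ} {W : Type} (M : ModelOn n m W) : W → Fml m → Prop
  | w, .pos p => w ∈ M.val p
  | w, .neg p => w ∉ M.val p
  | w, .and φ ψ => Sat M w φ ∧ Sat M w ψ
  | w, .or φ ψ => Sat M w φ ∨ Sat M w ψ
  | _, .box φ => ∀ u, Sat M u φ
  | _, .dia φ => ∃ u, Sat M u φ
  | w, .ag i φ => ∀ u, M.rel i w u → Sat M u φ
  | w, .dag i φ => ∃ u, M.rel i w u ∧ Sat M u φ

/-- Validity: `⊩ φ`. -/
def Valid (n m : ℕ) (φ : Fml m) : Prop :=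
  ∀ (W : Type) (M : ModelOn n m W) (w : W), Sat M w φ

/-- Semantic consequence `Γ ⊩ φ`. -/
def SemConseq (n m : ℕ) (Γ : Set (Fml m)) (φ : Fml m) : Prop :=
  ∀ (W : Type) (M : ModelOn n m W) (w : W), (∀ ψ ∈ Γ, Sat M w ψ) → Sat M w φ

/-- The Hilbert calculus `Ldm_n^m`: classical propositional logic, S5 for `□` and each
`[i]`, the bridge axiom, IOA, the n-choice axioms (for `n > 0`), with modus ponens and
necessitation (applied to theorems). `Hderiv n m Γ φ` is `Γ ⊢_{Ldm_n^m} φ`. -/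
inductive Hderiv (n m : ℕ) : Set (Fml m) → Fml m → Prop
  | prem {Γ} {φ} (h : φ ∈ Γ) : Hderiv n m Γ φ
  | ax1 {Γ} (φ ψ : Fml m) : Hderiv n m Γ (φ.impF (ψ.impF φ))
  | ax2 {Γ} (φ ψ χ : Fml m) :
      Hderiv n m Γ ((φ.impF (ψ.impF χ)).impF ((φ.impF ψ).impF (φ.impF χ)))
  | ax3 {Γ} (φ ψ : Fml m) :
      Hderiv n m Γ ((ψ.negF.impF φ.negF).impF (φ.impF ψ))
  | boxK {Γ} (φ ψ : Fml m) :
      Hderiv n m Γ ((Fml.box (φ.impF ψ)).impF ((Fml.box φ).impF (Fml.box ψ)))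
  | boxT {Γ} (φ : Fml m) : Hderiv n m Γ ((Fml.box φ).impF φ)
  | box5 {Γ} (φ : Fml m) : Hderiv n m Γ ((Fml.dia φ).impF (Fml.box (Fml.dia φ)))
  | boxDual {Γ} (φ : Fml m) : Hderiv n m Γ (Fml.or (Fml.box φ) (Fml.dia φ.negF))
  | agK {Γ} (i : Fin m) (φ ψ : Fml m) :
      Hderiv n m Γ ((Fml.ag i (φ.impF ψ)).impF ((Fml.ag i φ).impF (Fml.ag i ψ)))
  | agT {Γ} (i : Fin m) (φ : Fml m) : Hderiv n m Γ ((Fml.ag i φ).impF φ)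
  | ag5 {Γ} (i : Fin m) (φ : Fml m) :
      Hderiv n m Γ ((Fml.dag i φ).impF (Fml.ag i (Fml.dag i φ)))
  | agDual {Γ} (i : Fin m) (φ : Fml m) :
      Hderiv n m Γ (Fml.or (Fml.ag i φ) (Fml.dag i φ.negF))
  | bridge {Γ} (i : Fin m) (φ : Fml m) :
      Hderiv n m Γ ((Fml.box φ).impF (Fml.ag i φ))
  | ioa {Γ} (f : Fin m → Fml m) : Hderiv n m Γ (ioaAx f)
  | apc {Γ} (hn : 0 < n) (i : Fin m) (f : ℕ → Fml m) :
      Hderiv n m Γ (apcAx i f (n-1))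
  | mp {Γ} {φ ψ} : Hderiv n m Γ (φ.impF ψ) → Hderiv n m Γ φ → Hderiv n m Γ ψ
  | nec {Γ} {φ} : Hderiv n m ∅ φ → Hderiv n m Γ (Fml.box φ)

/-- A relational atom `R_i x y`. -/
abbrev RAtom (m : ℕ) : Type := Fin m × ℕ × ℕ
/-- The relational part of a labelled sequent: a multiset of relational atoms. -/
abbrev RAtoms (m : ℕ) : Type := Multiset (RAtom m)
/-- A labelled formula `x : φ`. -/
abbrev LFml (m : ℕ) : Type := ℕ × Fml m
/-- The formula part of a labelled sequent: a multiset of labelled formulas. -/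
abbrev LFmls (m : ℕ) : Type := Multiset (LFml m)

/-- The label `v` does not occur in the labelled sequent `R, Γ` (eigenvariable condition). -/
def freshIn {m : ℕ} (v : ℕ) (R : RAtoms m) (Γ : LFmls m) : Prop :=
  (∀ a ∈ R, a.2.1 ≠ v ∧ a.2.2 ≠ v) ∧ ∀ e ∈ Γ, e.1 ≠ v

/-- `Reach R i w u`: `u` is `i`-reachable from `w`, i.e. there is a (possibly empty)
path of `R_i`-atoms of `R` (traversed in either direction) connecting `w` to `u`. -/
inductive Reach {m : ℕ} (R : RAtoms m) (i : Fin m) : ℕ → ℕ → Prop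
  | refl (w : ℕ) : Reach R i w w
  | fwd {w u v : ℕ} : Reach R i w u → ((i, u, v) : RAtom m) ∈ R → Reach R i w v
  | bwd {w u v : ℕ} : Reach R i w u → ((i, v, u) : RAtom m) ∈ R → Reach R i w v

/-- The relational atoms `R_1 u_1 v, …, R_m u_m v` used by the rule (IOA). -/
def ioaAtoms {m : ℕ} (u : Fin m → ℕ) (v : ℕ) : RAtoms m :=
  Multiset.ofList ((List.finRange m).map fun i => ((i, u i, v) : RAtom m))

/-- Which optional rules are present in a labelled calculus, and whether the
`[i]`-rule keeps its principal formula in the premise. -/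
structure Flags : Type where
  refl : Bool    -- (refl_i)
  eucl : Bool    -- (eucl_i)
  diaAg : Bool   -- (⟨i⟩)
  pr : Bool      -- (Pr_i)
  ioa : Bool     -- (IOA)
  agKeep : Bool  -- premise of ([i]) keeps w:[i]φ

/-- `SeqH fl n m h R Γ`: the labelled sequent `R, Γ` has a derivation of height at most
`h` in the labelled calculus determined by `fl` (with parameters `n`, `m`). -/
inductive SeqH (fl : Flags) (n m : ℕ) : ℕ → RAtoms m → LFmls m → Prop
  | id {h : ℕ} {R : RAtoms m} {Γ : LFmls m} (w p : ℕ) :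
      SeqH fl n m h R ((w, Fml.pos p) ::ₘ (w, Fml.neg p) ::ₘ Γ)
  | andR {h R Γ} {w : ℕ} {φ ψ : Fml m} :
      SeqH fl n m h R ((w, Fml.and φ ψ) ::ₘ (w, φ) ::ₘ Γ) →
      SeqH fl n m h R ((w, Fml.and φ ψ) ::ₘ (w, ψ) ::ₘ Γ) →
      SeqH fl n m (h+1) R ((w, Fml.and φ ψ) ::ₘ Γ)
  | orR {h R Γ} {w : ℕ} {φ ψ : Fml m} :
      SeqH fl n m h R ((w, Fml.or φ ψ) ::ₘ (w, φ) ::ₘ (w, ψ) ::ₘ Γ) →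
      SeqH fl n m (h+1) R ((w, Fml.or φ ψ) ::ₘ Γ)
  | boxR {h R Γ} {w v : ℕ} {φ : Fml m}
      (hv : freshIn v R ((w, Fml.box φ) ::ₘ Γ)) :
      SeqH fl n m h R ((w, Fml.box φ) ::ₘ (v, φ) ::ₘ Γ) →
      SeqH fl n m (h+1) R ((w, Fml.box φ) ::ₘ Γ)
  | diaR {h R Γ} {w u : ℕ} {φ : Fml m} :
      SeqH fl n m h R ((w, Fml.dia φ) ::ₘ (u, φ) ::ₘ Γ) →
      SeqH fl n m (h+1) R ((w, Fml.dia φ) ::ₘ Γ)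
  | agR {h R Γ} {w v : ℕ} {i : Fin m} {φ : Fml m} (hfl : fl.agKeep = false)
      (hv : freshIn v R ((w, Fml.ag i φ) ::ₘ Γ)) :
      SeqH fl n m h (((i, w, v) : RAtom m) ::ₘ R) ((v, φ) ::ₘ Γ) →
      SeqH fl n m (h+1) R ((w, Fml.ag i φ) ::ₘ Γ)
  | agRKeep {h R Γ} {w v : ℕ} {i : Fin m} {φ : Fml m} (hfl : fl.agKeep = true)
      (hv : freshIn v R ((w, Fml.ag i φ) ::ₘ Γ)) :
      SeqH fl n m h (((i, w, v) : RAtom m) ::ₘ R) ((w, Fml.ag i φ) ::ₘ (v, φ) ::ₘ Γ) →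
      SeqH fl n m (h+1) R ((w, Fml.ag i φ) ::ₘ Γ)
  | dagR {h R Γ} {w u : ℕ} {i : Fin m} {φ : Fml m} (hfl : fl.diaAg = true) :
      SeqH fl n m h (((i, w, u) : RAtom m) ::ₘ R) ((w, Fml.dag i φ) ::ₘ (u, φ) ::ₘ Γ) →
      SeqH fl n m (h+1) (((i, w, u) : RAtom m) ::ₘ R) ((w, Fml.dag i φ) ::ₘ Γ)
  | reflR {h R Γ} {i : Fin m} {w : ℕ} (hfl : fl.refl = true) :
      SeqH fl n m h (((i, w, w) : RAtom m) ::ₘ R) Γ →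
      SeqH fl n m (h+1) R Γ
  | euclR {h R Γ} {i : Fin m} {w u v : ℕ} (hfl : fl.eucl = true) :
      SeqH fl n m h (((i, w, u) : RAtom m) ::ₘ ((i, w, v) : RAtom m) ::ₘ
        ((i, u, v) : RAtom m) ::ₘ R) Γ →
      SeqH fl n m (h+1) (((i, w, u) : RAtom m) ::ₘ ((i, w, v) : RAtom m) ::ₘ R) Γ
  | ioaR {h R Γ} (hfl : fl.ioa = true) (u : Fin m → ℕ) (v : ℕ) (hv : freshIn v R Γ) :
      SeqH fl n m h (ioaAtoms u v + R) Γ →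
      SeqH fl n m (h+1) R Γ
  | apcR {h R Γ} (hn : 0 < n) (i : Fin m) (w : Fin (n+1) → ℕ) :
      (∀ k j : Fin (n+1), k < j → SeqH fl n m h (((i, w k, w j) : RAtom m) ::ₘ R) Γ) →
      SeqH fl n m (h+1) R Γ
  | prR {h R Γ} {w u : ℕ} {i : Fin m} {φ : Fml m} (hfl : fl.pr = true)
      (hreach : Reach R i w u) :
      SeqH fl n m h R ((w, Fml.dag i φ) ::ₘ (u, φ) ::ₘ Γ) →
      SeqH fl n m (h+1) R ((w, Fml.dag i φ) ::ₘ Γ)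

/-- Derivability (of some height) in the labelled calculus determined by `fl`. -/
def Seq (fl : Flags) (n m : ℕ) (R : RAtoms m) (Γ : LFmls m) : Prop :=
  ∃ h, SeqH fl n m h R Γ

/-- The calculus `G3Ldm_n^m`. -/
def G3flags : Flags := ⟨true, true, true, false, true, false⟩
/-- The calculus `G3Ldm_n^m + PR`. -/
def G3PRflags : Flags := ⟨true, true, true, true, true, false⟩
/-- `G3Ldm_n^m + PR` without the rules `(refl_i)`. -/
def G3PRnoReflFlags : Flags := ⟨false, true, true, true, true, false⟩
/-- `G3Ldm_n^m + PR` without the rules `(eucl_i)`. -/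
def G3PRnoEuclFlags : Flags := ⟨true, false, true, true, true, false⟩
/-- The refined calculus `Ldm_n^m L`. -/
def LdmLflags : Flags := ⟨false, false, false, true, true, true⟩
/-- The refined single-agent calculus `Ldm_n^1 L` (no (IOA)). -/
def LdmL1flags : Flags := ⟨false, false, false, true, false, true⟩

/-- Substitution of the label `y` for the label `x`. -/
def substLab (x y v : ℕ) : ℕ := if v = x then y else v

def substR {m : ℕ} (x y : ℕ) (R : RAtoms m) : RAtoms m :=
  R.map fun a => (a.1, substLab x y a.2.1, substLab x y a.2.2)

def substF {m : ℕ} (x y : ℕ) (Γ : LFmls m) : LFmls m :=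
  Γ.map fun e => (substLab x y e.1, e.2)

/-- Height-preserving invertibility of every inference rule of the calculus given by `fl`. -/
def InvertAll (fl : Flags) (n m : ℕ) : Prop :=
  (∀ h R Γ (w : ℕ) (φ ψ : Fml m), SeqH fl n m h R ((w, Fml.and φ ψ) ::ₘ Γ) →
     SeqH fl n m h R ((w, Fml.and φ ψ) ::ₘ (w, φ) ::ₘ Γ) ∧
     SeqH fl n m h R ((w, Fml.and φ ψ) ::ₘ (w, ψ) ::ₘ Γ)) ∧
  (∀ h R Γ (w : ℕ) (φ ψ : Fml m), SeqH fl n m h R ((w, Fml.or φ ψ) ::ₘ Γ) →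
     SeqH fl n m h R ((w, Fml.or φ ψ) ::ₘ (w, φ) ::ₘ (w, ψ) ::ₘ Γ)) ∧
  (∀ h R Γ (w v : ℕ) (φ : Fml m), freshIn v R ((w, Fml.box φ) ::ₘ Γ) →
     SeqH fl n m h R ((w, Fml.box φ) ::ₘ Γ) →
     SeqH fl n m h R ((w, Fml.box φ) ::ₘ (v, φ) ::ₘ Γ)) ∧
  (∀ h R Γ (w u : ℕ) (φ : Fml m), SeqH fl n m h R ((w, Fml.dia φ) ::ₘ Γ) →
     SeqH fl n m h R ((w, Fml.dia φ) ::ₘ (u, φ) ::ₘ Γ)) ∧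
  (fl.agKeep = false → ∀ h R Γ (w v : ℕ) (i : Fin m) (φ : Fml m),
     freshIn v R ((w, Fml.ag i φ) ::ₘ Γ) →
     SeqH fl n m h R ((w, Fml.ag i φ) ::ₘ Γ) →
     SeqH fl n m h (((i, w, v) : RAtom m) ::ₘ R) ((v, φ) ::ₘ Γ)) ∧
  (fl.agKeep = true → ∀ h R Γ (w v : ℕ) (i : Fin m) (φ : Fml m),
     freshIn v R ((w, Fml.ag i φ) ::ₘ Γ) →
     SeqH fl n m h R ((w, Fml.ag i φ) ::ₘ Γ) →
     SeqH fl n m h (((i, w, v) : RAtom m) ::ₘ R) ((w, Fml.ag i φ) ::ₘ (v, φ) ::ₘ Γ)) ∧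
  (fl.diaAg = true → ∀ h R Γ (w u : ℕ) (i : Fin m) (φ : Fml m),
     SeqH fl n m h (((i, w, u) : RAtom m) ::ₘ R) ((w, Fml.dag i φ) ::ₘ Γ) →
     SeqH fl n m h (((i, w, u) : RAtom m) ::ₘ R) ((w, Fml.dag i φ) ::ₘ (u, φ) ::ₘ Γ)) ∧
  (fl.refl = true → ∀ h R Γ (i : Fin m) (w : ℕ), SeqH fl n m h R Γ →
     SeqH fl n m h (((i, w, w) : RAtom m) ::ₘ R) Γ) ∧
  (fl.eucl = true → ∀ h R Γ (i : Fin m) (w u v : ℕ),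
     SeqH fl n m h (((i, w, u) : RAtom m) ::ₘ ((i, w, v) : RAtom m) ::ₘ R) Γ →
     SeqH fl n m h (((i, w, u) : RAtom m) ::ₘ ((i, w, v) : RAtom m) ::ₘ
       ((i, u, v) : RAtom m) ::ₘ R) Γ) ∧
  (fl.ioa = true → ∀ h R Γ (u : Fin m → ℕ) (v : ℕ), freshIn v R Γ →
     SeqH fl n m h R Γ → SeqH fl n m h (ioaAtoms u v + R) Γ) ∧
  (0 < n → ∀ h R Γ (i : Fin m) (w : Fin (n+1) → ℕ) (k j : Fin (n+1)), k < j →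
     SeqH fl n m h R Γ → SeqH fl n m h (((i, w k, w j) : RAtom m) ::ₘ R) Γ) ∧
  (fl.pr = true → ∀ h R Γ (w u : ℕ) (i : Fin m) (φ : Fml m), Reach R i w u →
     SeqH fl n m h R ((w, Fml.dag i φ) ::ₘ Γ) →
     SeqH fl n m h R ((w, Fml.dag i φ) ::ₘ (u, φ) ::ₘ Γ))

/-- A labelled sequent `R, Γ` is satisfied in `M` under the interpretation `I`. -/
def SeqSat {n m : ℕ} {W : Type} (M : ModelOn n m W) (I : ℕ → W)
    (R : RAtoms m) (Γ : LFmls m) : Prop :=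
  (∀ a ∈ R, M.rel a.1 (I a.2.1) (I a.2.2)) → ∃ e ∈ Γ, Sat M (I e.1) e.2

/-- A labelled sequent is valid: satisfied in every model under every interpretation. -/
def SeqValid (n m : ℕ) (R : RAtoms m) (Γ : LFmls m) : Prop :=
  ∀ (W : Type) (M : ModelOn n m W) (I : ℕ → W), SeqSat M I R Γ

/-! ### Auxiliary development for soundness and completeness -/

namespace Fml

@[simp] lemma negF_negF {m : ℕ} (φ : Fml m) : φ.negF.negF = φ := by
  induction φ <;> simp [negF, *]

end Fml

section Hilbert

variable {n m : ℕ}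

open Fml

lemma weaken {Γ Γ' : Set (Fml m)} {φ : Fml m} (h : Hderiv n m Γ φ) (hs : Γ ⊆ Γ') :
    Hderiv n m Γ' φ := by
  induction h generalizing Γ' with
  | prem h => exact .prem (hs h)
  | ax1 φ ψ => exact .ax1 φ ψ
  | ax2 φ ψ χ => exact .ax2 φ ψ χ
  | ax3 φ ψ => exact .ax3 φ ψ
  | boxK φ ψ => exact .boxK φ ψ
  | boxT φ => exact .boxT φ
  | box5 φ => exact .box5 φ
  | boxDual φ => exact .boxDual φ
  | agK i φ ψ => exact .agK i φ ψ
  | agT i φ => exact .agT i φ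
  | ag5 i φ => exact .ag5 i φ
  | agDual i φ => exact .agDual i φ
  | bridge i φ => exact .bridge i φ
  | ioa f => exact .ioa f
  | apc hn i f => exact .apc hn i f
  | mp _ _ ih1 ih2 => exact .mp (ih1 hs) (ih2 hs)
  | nec h => exact .nec h

lemma cutSet {Γ Δ : Set (Fml m)} {φ : Fml m} (h : Hderiv n m Δ φ)
    (hd : ∀ ψ ∈ Δ, Hderiv n m Γ ψ) : Hderiv n m Γ φ := by
  induction h with
  | prem h => exact hd _ h
  | ax1 φ ψ => exact .ax1 φ ψ
  | ax2 φ ψ χ => exact .ax2 φ ψ χ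
  | ax3 φ ψ => exact .ax3 φ ψ
  | boxK φ ψ => exact .boxK φ ψ
  | boxT φ => exact .boxT φ
  | box5 φ => exact .box5 φ
  | boxDual φ => exact .boxDual φ
  | agK i φ ψ => exact .agK i φ ψ
  | agT i φ => exact .agT i φ
  | ag5 i φ => exact .ag5 i φ
  | agDual i φ => exact .agDual i φ
  | bridge i φ => exact .bridge i φ
  | ioa f => exact .ioa f
  | apc hn i f => exact .apc hn i f
  | mp _ _ ih1 ih2 => exact .mp (ih1 hd) (ih2 hd)
  | nec h => exact .nec h

lemma imp_self' {Γ : Set (Fml m)} (φ : Fml m) : Hderiv n m Γ (φ.impF φ) :=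
  .mp (.mp (.ax2 φ (φ.impF φ) φ) (.ax1 φ (φ.impF φ))) (.ax1 φ φ)

lemma deduction_aux {Γ' : Set (Fml m)} {ψ : Fml m} (h : Hderiv n m Γ' ψ) :
    ∀ (φ : Fml m) (Γ : Set (Fml m)), Γ' ⊆ insert φ Γ → Hderiv n m Γ (φ.impF ψ) := by
  induction h with
  | @prem _ χ h =>
    intro φ Γ hs
    rcases hs h with h | h
    · subst h; exact imp_self' _
    · exact .mp (.ax1 _ _) (.prem h)
  | ax1 α β => intro φ Γ _; exact .mp (.ax1 _ _) (.ax1 α β)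
  | ax2 α β χ => intro φ Γ _; exact .mp (.ax1 _ _) (.ax2 α β χ)
  | ax3 α β => intro φ Γ _; exact .mp (.ax1 _ _) (.ax3 α β)
  | boxK α β => intro φ Γ _; exact .mp (.ax1 _ _) (.boxK α β)
  | boxT α => intro φ Γ _; exact .mp (.ax1 _ _) (.boxT α)
  | box5 α => intro φ Γ _; exact .mp (.ax1 _ _) (.box5 α)
  | boxDual α => intro φ Γ _; exact .mp (.ax1 _ _) (.boxDual α)
  | agK i α β => intro φ Γ _; exact .mp (.ax1 _ _) (.agK i α β)
  | agT i α => intro φ Γ _; exact .mp (.ax1 _ _) (.agT i α)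
  | ag5 i α => intro φ Γ _; exact .mp (.ax1 _ _) (.ag5 i α)
  | agDual i α => intro φ Γ _; exact .mp (.ax1 _ _) (.agDual i α)
  | bridge i α => intro φ Γ _; exact .mp (.ax1 _ _) (.bridge i α)
  | ioa f => intro φ Γ _; exact .mp (.ax1 _ _) (.ioa f)
  | apc hn i f => intro φ Γ _; exact .mp (.ax1 _ _) (.apc hn i f)
  | mp _ _ ih1 ih2 =>
    intro φ Γ hs
    exact .mp (.mp (.ax2 _ _ _) (ih1 φ Γ hs)) (ih2 φ Γ hs)
  | nec h => intro φ Γ _; exact .mp (.ax1 _ _) (.nec h)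

lemma deduction {Γ : Set (Fml m)} {φ ψ : Fml m} (h : Hderiv n m (insert φ Γ) ψ) :
    Hderiv n m Γ (φ.impF ψ) :=
  deduction_aux h φ Γ subset_rfl

lemma undeduction {Γ : Set (Fml m)} {φ ψ : Fml m} (h : Hderiv n m Γ (φ.impF ψ)) :
    Hderiv n m (insert φ Γ) ψ :=
  .mp (weaken h (Set.subset_insert _ _)) (.prem (Set.mem_insert _ _))

lemma hs {Γ : Set (Fml m)} {α β γ : Fml m} (h1 : Hderiv n m Γ (α.impF β))
    (h2 : Hderiv n m Γ (β.impF γ)) : Hderiv n m Γ (α.impF γ) :=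
  deduction (.mp (weaken h2 (Set.subset_insert _ _)) (undeduction h1))

lemma contrap {Γ : Set (Fml m)} {α β : Fml m} (h : Hderiv n m Γ (α.impF β)) :
    Hderiv n m Γ (β.negF.impF α.negF) := by
  have h3 := Hderiv.ax3 (n := n) (m := m) (Γ := Γ) β.negF α.negF
  rw [negF_negF, negF_negF] at h3
  exact .mp h3 h

lemma exfalso_imp {Γ : Set (Fml m)} (α β : Fml m) :
    Hderiv n m Γ (α.negF.impF (α.impF β)) :=
  hs (.ax1 α.negF β.negF) (.ax3 α β)

lemma mp_pair {Γ : Set (Fml m)} {α : Fml m} (β : Fml m) (h1 : Hderiv n m Γ α)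
    (h2 : Hderiv n m Γ α.negF) : Hderiv n m Γ β :=
  .mp (.mp (exfalso_imp α β) h2) h1

lemma and_negF {m : ℕ} (α β : Fml m) : (Fml.and α β).negF = α.impF β.negF := rfl

lemma impF_negF_eq_and {m : ℕ} (α β : Fml m) : (α.impF β.negF).negF = Fml.and α β := by
  simp [Fml.impF, Fml.negF]

lemma or_eq {m : ℕ} (α β : Fml m) : Fml.or α β = α.negF.impF β := by
  simp [Fml.impF]

lemma andIntro {Γ : Set (Fml m)} (α β : Fml m) :
    Hderiv n m Γ (α.impF (β.impF (Fml.and α β))) := by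
  apply deduction; apply deduction
  set Γ2 := insert β (insert α Γ) with hΓ2
  have ha : Hderiv n m Γ2 α := .prem (Set.mem_insert_of_mem _ (Set.mem_insert _ _))
  have hb : Hderiv n m Γ2 β := .prem (Set.mem_insert _ _)
  have h1 : Hderiv n m Γ2 ((α.impF β.negF).impF β.negF) := by
    apply deduction
    exact .mp (.prem (Set.mem_insert _ _)) (weaken ha (Set.subset_insert _ _))
  have h2 := Hderiv.ax3 (n := n) (m := m) (Γ := Γ2) β (α.impF β.negF).negF
  rw [negF_negF] at h2
  have h3 : Hderiv n m Γ2 ((α.impF β.negF).negF) := .mp (.mp h2 h1) hb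
  rwa [impF_negF_eq_and] at h3

lemma andElimL {Γ : Set (Fml m)} (α β : Fml m) :
    Hderiv n m Γ ((Fml.and α β).impF α) := by
  have h := exfalso_imp (n := n) (m := m) (Γ := Γ) α β.negF
  have h3 := Hderiv.ax3 (n := n) (m := m) (Γ := Γ) (Fml.and α β) α
  rw [and_negF] at h3
  exact .mp h3 h

lemma andElimR {Γ : Set (Fml m)} (α β : Fml m) :
    Hderiv n m Γ ((Fml.and α β).impF β) := by
  have h : Hderiv n m Γ (β.negF.impF (α.impF β.negF)) := .ax1 _ _
  have h3 := Hderiv.ax3 (n := n) (m := m) (Γ := Γ) (Fml.and α β) β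
  rw [and_negF] at h3
  exact .mp h3 h

lemma clavius {Γ : Set (Fml m)} (α : Fml m) :
    Hderiv n m Γ ((α.negF.impF α).impF α) := by
  have key : Hderiv n m Γ (α.negF.impF (α.negF.impF α).negF) := by
    have : (α.negF.impF α).negF = Fml.and α.negF α.negF := by
      simp [Fml.impF, Fml.negF]
    rw [this]
    apply deduction
    have hp : Hderiv n m (insert α.negF Γ) α.negF := .prem (Set.mem_insert _ _)
    exact .mp (.mp (andIntro _ _) hp) hp
  have h3 := Hderiv.ax3 (n := n) (m := m) (Γ := Γ) (α.negF.impF α) α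
  exact .mp h3 key

lemma orIntroL {Γ : Set (Fml m)} (α β : Fml m) :
    Hderiv n m Γ (α.impF (Fml.or α β)) := by
  have h := exfalso_imp (n := n) (m := m) (Γ := Γ) α.negF β
  rw [negF_negF, ← or_eq] at h
  exact h

lemma orIntroR {Γ : Set (Fml m)} (α β : Fml m) :
    Hderiv n m Γ (β.impF (Fml.or α β)) := by
  have h := Hderiv.ax1 (n := n) (m := m) (Γ := Γ) β α.negF
  rw [← or_eq] at h
  exact h

lemma orElim {Γ : Set (Fml m)} {α β χ : Fml m} (h1 : Hderiv n m Γ (α.impF χ))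
    (h2 : Hderiv n m Γ (β.impF χ)) : Hderiv n m Γ ((Fml.or α β).impF χ) := by
  rw [or_eq]
  apply deduction
  apply Hderiv.mp (clavius χ)
  apply deduction
  set Γ2 := insert χ.negF (insert (α.negF.impF β) Γ) with hΓ2
  have hna : Hderiv n m Γ2 α.negF := by
    refine .mp (contrap (weaken h1 ?_)) (.prem (Set.mem_insert _ _))
    exact (Set.subset_insert _ _).trans (Set.subset_insert _ _)
  have hb : Hderiv n m Γ2 β :=
    .mp (.prem (Set.mem_insert_of_mem _ (Set.mem_insert _ _))) hna
  exact .mp (weaken h2 ((Set.subset_insert _ _).trans (Set.subset_insert _ _))) hb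

/-! ### Modal lemmas -/

lemma necK_box {Γ : Set (Fml m)} {φ ψ : Fml m} (h : Hderiv n m ∅ (φ.impF ψ)) :
    Hderiv n m Γ ((Fml.box φ).impF (Fml.box ψ)) :=
  .mp (.boxK φ ψ) (.nec h)

lemma necK_ag {Γ : Set (Fml m)} (i : Fin m) {φ ψ : Fml m} (h : Hderiv n m ∅ (φ.impF ψ)) :
    Hderiv n m Γ ((Fml.ag i φ).impF (Fml.ag i ψ)) :=
  .mp (.agK i φ ψ) (.mp (.bridge i _) (.nec h))

lemma tdual_box {Γ : Set (Fml m)} (φ : Fml m) :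
    Hderiv n m Γ (φ.impF (Fml.dia φ)) := by
  have h := contrap (Hderiv.boxT (n := n) (m := m) (Γ := Γ) φ.negF)
  simp only [Fml.negF, negF_negF] at h
  exact h

lemma tdual_ag {Γ : Set (Fml m)} (i : Fin m) (φ : Fml m) :
    Hderiv n m Γ (φ.impF (Fml.dag i φ)) := by
  have h := contrap (Hderiv.agT (n := n) (m := m) (Γ := Γ) i φ.negF)
  simp only [Fml.negF, negF_negF] at h
  exact h

lemma b_box {Γ : Set (Fml m)} (φ : Fml m) :
    Hderiv n m Γ (φ.impF (Fml.box (Fml.dia φ))) :=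
  hs (tdual_box φ) (.box5 φ)

lemma b_ag {Γ : Set (Fml m)} (i : Fin m) (φ : Fml m) :
    Hderiv n m Γ (φ.impF (Fml.ag i (Fml.dag i φ))) :=
  hs (tdual_ag i φ) (.ag5 i φ)

lemma revb_box {Γ : Set (Fml m)} (φ : Fml m) :
    Hderiv n m Γ ((Fml.dia (Fml.box φ)).impF φ) := by
  have h := contrap (b_box (n := n) (m := m) (Γ := Γ) φ.negF)
  simp only [Fml.negF, negF_negF] at h
  exact h

lemma revb_ag {Γ : Set (Fml m)} (i : Fin m) (φ : Fml m) :
    Hderiv n m Γ ((Fml.dag i (Fml.ag i φ)).impF φ) := by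
  have h := contrap (b_ag (n := n) (m := m) (Γ := Γ) i φ.negF)
  simp only [Fml.negF, negF_negF] at h
  exact h

lemma five'_box {Γ : Set (Fml m)} (φ : Fml m) :
    Hderiv n m Γ ((Fml.dia (Fml.box φ)).impF (Fml.box φ)) :=
  hs (.box5 (Fml.box φ)) (necK_box (revb_box φ))

lemma five'_ag {Γ : Set (Fml m)} (i : Fin m) (φ : Fml m) :
    Hderiv n m Γ ((Fml.dag i (Fml.ag i φ)).impF (Fml.ag i φ)) :=
  hs (.ag5 i (Fml.ag i φ)) (necK_ag i (revb_ag i φ))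

lemma four_box {Γ : Set (Fml m)} (φ : Fml m) :
    Hderiv n m Γ ((Fml.box φ).impF (Fml.box (Fml.box φ))) :=
  hs (b_box (Fml.box φ)) (necK_box (five'_box φ))

lemma four_ag {Γ : Set (Fml m)} (i : Fin m) (φ : Fml m) :
    Hderiv n m Γ ((Fml.ag i φ).impF (Fml.ag i (Fml.ag i φ))) :=
  hs (b_ag i (Fml.ag i φ)) (necK_ag i (five'_ag i φ))

/-! ### Finite premise machinery -/

/-- `χ₁ → χ₂ → ⋯ → χₖ → ψ`. -/
def impsF {m : ℕ} (L : List (Fml m)) (ψ : Fml m) : Fml m :=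
  L.foldl (fun acc χ => Fml.impF χ acc) ψ

@[simp] lemma impsF_nil {m : ℕ} (ψ : Fml m) : impsF [] ψ = ψ := rfl

@[simp] lemma impsF_cons {m : ℕ} (a : Fml m) (L : List (Fml m)) (ψ : Fml m) :
    impsF (a :: L) ψ = impsF L (a.impF ψ) := rfl

lemma hd_of_list {L : List (Fml m)} {ψ : Fml m}
    (h : Hderiv n m {χ | χ ∈ L} ψ) : Hderiv n m ∅ (impsF L ψ) := by
  induction L generalizing ψ with
  | nil =>
    have : ({χ | χ ∈ ([] : List (Fml m))} : Set (Fml m)) = ∅ := by ext x; simp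
    rw [this] at h; exact h
  | cons a L ih =>
    have : ({χ | χ ∈ a :: L} : Set (Fml m)) = insert a {χ | χ ∈ L} := by ext x; simp
    rw [this] at h
    rw [impsF_cons]
    exact ih (deduction h)

lemma hd_apply {Γ : Set (Fml m)} {L : List (Fml m)} {ψ : Fml m}
    (h : Hderiv n m Γ (impsF L ψ)) (hp : ∀ χ ∈ L, Hderiv n m Γ χ) :
    Hderiv n m Γ ψ := by
  induction L generalizing ψ with
  | nil => exact h
  | cons a L ih =>
    rw [impsF_cons] at h
    have := ih (ψ := a.impF ψ) h (fun χ hχ => hp χ (by simp [hχ]))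
    exact .mp this (hp a (by simp))

lemma comp_snd {Γ : Set (Fml m)} {A B C D : Fml m}
    (h1 : Hderiv n m Γ (A.impF (B.impF C))) (h2 : Hderiv n m Γ (C.impF D)) :
    Hderiv n m Γ (A.impF (B.impF D)) := by
  apply deduction
  exact hs (undeduction h1) (weaken h2 (Set.subset_insert _ _))

lemma imp_mono_imp {Γ : Set (Fml m)} {C D : Fml m} (a : Fml m)
    (h : Hderiv n m Γ (C.impF D)) : Hderiv n m Γ ((a.impF C).impF (a.impF D)) := by
  apply deduction; apply deduction
  refine .mp (weaken h ?_) (.mp (.prem (Set.mem_insert_of_mem _ (Set.mem_insert _ _))) (.prem (Set.mem_insert _ _)))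
  exact (Set.subset_insert _ _).trans (Set.subset_insert _ _)

lemma imps_mono {Γ : Set (Fml m)} {C D : Fml m} (L : List (Fml m))
    (h : Hderiv n m Γ (C.impF D)) : Hderiv n m Γ ((impsF L C).impF (impsF L D)) := by
  induction L generalizing C D with
  | nil => exact h
  | cons a L ih => exact ih (imp_mono_imp a h)

lemma lift_imps' (b : Fml m → Fml m)
    (hK : ∀ φ ψ : Fml m, Hderiv n m ∅ ((b (φ.impF ψ)).impF ((b φ).impF (b ψ))))
    (L : List (Fml m)) (ψ : Fml m) :
    Hderiv n m ∅ ((b (impsF L ψ)).impF (impsF (L.map b) (b ψ))) := by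
  induction L generalizing ψ with
  | nil => exact imp_self' _
  | cons a L ih =>
    simp only [impsF_cons, List.map_cons]
    exact hs (ih (a.impF ψ)) (imps_mono _ (hK a ψ))

lemma lift_imps (b : Fml m → Fml m)
    (hK : ∀ φ ψ : Fml m, Hderiv n m ∅ ((b (φ.impF ψ)).impF ((b φ).impF (b ψ))))
    (hN : ∀ φ : Fml m, Hderiv n m ∅ φ → Hderiv n m ∅ (b φ))
    {L : List (Fml m)} {ψ : Fml m} (h : Hderiv n m ∅ (impsF L ψ)) :
    Hderiv n m ∅ (impsF (L.map b) (b ψ)) :=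
  .mp (lift_imps' b hK L ψ) (hN _ h)

lemma boxLift {L : List (Fml m)} {ψ : Fml m} (h : Hderiv n m ∅ (impsF L ψ)) :
    Hderiv n m ∅ (impsF (L.map Fml.box) (Fml.box ψ)) :=
  lift_imps Fml.box (fun φ ψ => .boxK φ ψ) (fun _ hφ => .nec hφ) h

lemma agLift (i : Fin m) {L : List (Fml m)} {ψ : Fml m} (h : Hderiv n m ∅ (impsF L ψ)) :
    Hderiv n m ∅ (impsF (L.map (Fml.ag i)) (Fml.ag i ψ)) :=
  lift_imps (Fml.ag i) (fun φ ψ => .agK i φ ψ) (fun _ hφ => .mp (.bridge i _) (.nec hφ)) h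

/-! ### Consistency, compactness, Lindenbaum -/

/-- A canonical contradiction. -/
def botF {m : ℕ} : Fml m := Fml.and (Fml.pos 0) (Fml.neg 0)

lemma not_bot {Γ : Set (Fml m)} : Hderiv n m Γ (botF (m := m)).negF :=
  imp_self' (Fml.pos 0)

lemma bot_elim {Γ : Set (Fml m)} (χ : Fml m) : Hderiv n m Γ ((botF (m := m)).impF χ) := by
  apply deduction
  have hb : Hderiv n m (insert botF Γ) (botF (m := m)) := .prem (Set.mem_insert _ _)
  exact mp_pair χ (.mp (andElimL _ _) hb) (.mp (andElimR _ _) hb)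

/-- Consistency of a set of formulas. -/
def Con (n m : ℕ) (S : Set (Fml m)) : Prop := ¬ Hderiv n m S botF

lemma neg_of_incon {Γ : Set (Fml m)} {φ : Fml m}
    (h : Hderiv n m (insert φ Γ) botF) : Hderiv n m Γ φ.negF :=
  .mp (contrap (deduction h)) not_bot

lemma of_incon_neg {Γ : Set (Fml m)} {φ : Fml m}
    (h : Hderiv n m (insert φ.negF Γ) botF) : Hderiv n m Γ φ := by
  have := neg_of_incon h
  rwa [Fml.negF_negF] at this

lemma compact {Γ : Set (Fml m)} {φ : Fml m} (h : Hderiv n m Γ φ) :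
    ∃ L : List (Fml m), (∀ χ ∈ L, χ ∈ Γ) ∧ Hderiv n m {χ | χ ∈ L} φ := by
  induction h with
  | @prem _ χ h => exact ⟨[χ], by simp [h], .prem (by simp)⟩
  | ax1 φ ψ => exact ⟨[], by simp, .ax1 φ ψ⟩
  | ax2 φ ψ χ => exact ⟨[], by simp, .ax2 φ ψ χ⟩
  | ax3 φ ψ => exact ⟨[], by simp, .ax3 φ ψ⟩
  | boxK φ ψ => exact ⟨[], by simp, .boxK φ ψ⟩
  | boxT φ => exact ⟨[], by simp, .boxT φ⟩
  | box5 φ => exact ⟨[], by simp, .box5 φ⟩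
  | boxDual φ => exact ⟨[], by simp, .boxDual φ⟩
  | agK i φ ψ => exact ⟨[], by simp, .agK i φ ψ⟩
  | agT i φ => exact ⟨[], by simp, .agT i φ⟩
  | ag5 i φ => exact ⟨[], by simp, .ag5 i φ⟩
  | agDual i φ => exact ⟨[], by simp, .agDual i φ⟩
  | bridge i φ => exact ⟨[], by simp, .bridge i φ⟩
  | ioa f => exact ⟨[], by simp, .ioa f⟩
  | apc hn i f => exact ⟨[], by simp, .apc hn i f⟩
  | mp _ _ ih1 ih2 =>
    obtain ⟨L1, hm1, hd1⟩ := ih1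
    obtain ⟨L2, hm2, hd2⟩ := ih2
    refine ⟨L1 ++ L2, ?_, ?_⟩
    · intro χ hχ; rcases List.mem_append.mp hχ with h | h
      · exact hm1 χ h
      · exact hm2 χ h
    · exact .mp (weaken hd1 (fun χ hχ => by simp at hχ ⊢; exact Or.inl hχ))
        (weaken hd2 (fun χ hχ => by simp at hχ ⊢; exact Or.inr hχ))
  | nec h => exact ⟨[], by simp, .nec h⟩

lemma chain_bound {c : Set (Set (Fml m))} (hchain : IsChain (· ⊆ ·) c)
    (hne : c.Nonempty) (L : List (Fml m)) (hL : ∀ χ ∈ L, χ ∈ ⋃₀ c) :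
    ∃ T ∈ c, ∀ χ ∈ L, χ ∈ T := by
  induction L with
  | nil => exact ⟨hne.choose, hne.choose_spec, by simp⟩
  | cons a L ih =>
    obtain ⟨T, hT, hall⟩ := ih (fun χ hχ => hL χ (by simp [hχ]))
    obtain ⟨T', hT', ha⟩ := hL a (by simp)
    rcases hchain.total hT hT' with hsub | hsub
    · exact ⟨T', hT', fun χ hχ => by
        rcases List.mem_cons.mp hχ with h | h
        · exact h ▸ ha
        · exact hsub (hall χ h)⟩
    · exact ⟨T, hT, fun χ hχ => by
        rcases List.mem_cons.mp hχ with h | h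
        · exact h ▸ hsub ha
        · exact hall χ h⟩

/-- Maximal consistent set. -/
def MCS (n m : ℕ) (Δ : Set (Fml m)) : Prop :=
  Con n m Δ ∧ ∀ T, Con n m T → Δ ⊆ T → T = Δ

lemma lindenbaum {S : Set (Fml m)} (h : Con n m S) :
    ∃ Δ, S ⊆ Δ ∧ MCS n m Δ := by
  have hch : ∀ c ⊆ {T | Con n m T}, IsChain (· ⊆ ·) c → c.Nonempty →
      ∃ ub ∈ {T | Con n m T}, ∀ s ∈ c, s ⊆ ub := by
    intro c hc hchain hne
    refine ⟨⋃₀ c, ?_, fun s hs => Set.subset_sUnion_of_mem hs⟩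
    intro hbot
    obtain ⟨L, hL, hd⟩ := compact hbot
    obtain ⟨T, hT, hall⟩ := chain_bound hchain hne L hL
    exact hc hT (weaken hd (fun χ hχ => hall χ hχ))
  obtain ⟨Δ, hsub, hmax⟩ := zorn_subset_nonempty {T | Con n m T} hch S h
  exact ⟨Δ, hsub, hmax.1, fun T hT hsub' => subset_antisymm (hmax.2 hT hsub') hsub'⟩

section MCSsec

variable {Δ : Set (Fml m)} (hΔ : MCS n m Δ)

include hΔ

lemma mcs_closed {φ : Fml m} (h : Hderiv n m Δ φ) : φ ∈ Δ := by
  have hcon : Con n m (insert φ Δ) := by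
    intro hbot
    exact hΔ.1 (mp_pair _ h (neg_of_incon hbot))
  have := hΔ.2 _ hcon (Set.subset_insert _ _)
  rw [← this]; exact Set.mem_insert _ _

lemma mcs_thm {φ : Fml m} (h : Hderiv n m ∅ φ) : φ ∈ Δ :=
  mcs_closed hΔ (weaken h (Set.empty_subset _))

lemma mcs_mem_or_neg (φ : Fml m) : φ ∈ Δ ∨ φ.negF ∈ Δ := by
  by_cases h : φ ∈ Δ
  · exact Or.inl h
  · right
    apply mcs_closed hΔ
    apply neg_of_incon
    by_contra hcon
    have := hΔ.2 _ hcon (Set.subset_insert _ _)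
    exact h (by rw [← this]; exact Set.mem_insert _ _)

lemma mcs_not_both {φ : Fml m} (h1 : φ ∈ Δ) (h2 : φ.negF ∈ Δ) : False :=
  hΔ.1 (mp_pair _ (.prem h1) (.prem h2))

lemma mcs_neg_iff {φ : Fml m} : φ.negF ∈ Δ ↔ φ ∉ Δ := by
  constructor
  · intro h hφ; exact mcs_not_both hΔ hφ h
  · intro h; rcases mcs_mem_or_neg hΔ φ with h' | h'
    · exact absurd h' h
    · exact h'

lemma mcs_mp {φ ψ : Fml m} (h : φ.impF ψ ∈ Δ) (hφ : φ ∈ Δ) : ψ ∈ Δ :=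
  mcs_closed hΔ (.mp (.prem h) (.prem hφ))

lemma mcs_and_iff {φ ψ : Fml m} : Fml.and φ ψ ∈ Δ ↔ φ ∈ Δ ∧ ψ ∈ Δ := by
  constructor
  · intro h
    exact ⟨mcs_closed hΔ (.mp (andElimL _ _) (.prem h)),
      mcs_closed hΔ (.mp (andElimR _ _) (.prem h))⟩
  · rintro ⟨h1, h2⟩
    exact mcs_closed hΔ (.mp (.mp (andIntro _ _) (.prem h1)) (.prem h2))

lemma mcs_or_iff {φ ψ : Fml m} : Fml.or φ ψ ∈ Δ ↔ φ ∈ Δ ∨ ψ ∈ Δ := by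
  constructor
  · intro h
    by_contra hc
    push_neg at hc
    have h1 : φ.negF ∈ Δ := (mcs_neg_iff hΔ).mpr hc.1
    have h2 : ψ.negF ∈ Δ := (mcs_neg_iff hΔ).mpr hc.2
    have : (Fml.or φ ψ).negF ∈ Δ := by
      have : (Fml.or φ ψ).negF = Fml.and φ.negF ψ.negF := rfl
      rw [this]; exact (mcs_and_iff hΔ).mpr ⟨h1, h2⟩
    exact mcs_not_both hΔ h this
  · intro h
    rcases h with h | h
    · exact mcs_closed hΔ (.mp (orIntroL _ _) (.prem h))
    · exact mcs_closed hΔ (.mp (orIntroR _ _) (.prem h))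

end MCSsec

/-! ### Canonical relations -/

/-- Canonical accessibility for agent `i`. -/
def canRel (i : Fin m) (Δ Δ' : Set (Fml m)) : Prop := ∀ ψ, Fml.ag i ψ ∈ Δ → ψ ∈ Δ'

/-- Canonical accessibility for `□`. -/
def canBox (Δ Δ' : Set (Fml m)) : Prop := ∀ ψ, Fml.box ψ ∈ Δ → ψ ∈ Δ'

lemma boxEq {Δ Δ' : Set (Fml m)} (hΔ : MCS n m Δ) (hΔ' : MCS n m Δ')
    (h : canBox Δ Δ') (ψ : Fml m) : Fml.box ψ ∈ Δ ↔ Fml.box ψ ∈ Δ' := by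
  constructor
  · intro hb
    exact h _ (mcs_closed hΔ (.mp (four_box ψ) (.prem hb)))
  · intro hb
    by_contra hnb
    have h1 : Fml.dia ψ.negF ∈ Δ := (mcs_neg_iff hΔ).mpr hnb
    have h2 : Fml.box (Fml.dia ψ.negF) ∈ Δ :=
      mcs_closed hΔ (.mp (.box5 _) (.prem h1))
    exact mcs_not_both hΔ' hb (h _ h2)

lemma agBoxEq {Δ Δ' : Set (Fml m)} (hΔ : MCS n m Δ) (hΔ' : MCS n m Δ') {i : Fin m}
    (h : canRel i Δ Δ') (ψ : Fml m) : Fml.box ψ ∈ Δ ↔ Fml.box ψ ∈ Δ' := by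
  constructor
  · intro hb
    have h1 : Fml.box (Fml.box ψ) ∈ Δ := mcs_closed hΔ (.mp (four_box ψ) (.prem hb))
    have h2 : Fml.ag i (Fml.box ψ) ∈ Δ := mcs_closed hΔ (.mp (.bridge i _) (.prem h1))
    exact h _ h2
  · intro hb
    by_contra hnb
    have h1 : Fml.dia ψ.negF ∈ Δ := (mcs_neg_iff hΔ).mpr hnb
    have h2 : Fml.box (Fml.dia ψ.negF) ∈ Δ :=
      mcs_closed hΔ (.mp (.box5 _) (.prem h1))
    have h3 : Fml.ag i (Fml.dia ψ.negF) ∈ Δ :=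
      mcs_closed hΔ (.mp (.bridge i _) (.prem h2))
    exact mcs_not_both hΔ' hb (h _ h3)

lemma mcs_dia_iff_box_dia {Δ : Set (Fml m)} (hΔ : MCS n m Δ) (φ : Fml m) :
    Fml.dia φ ∈ Δ ↔ Fml.box (Fml.dia φ) ∈ Δ := by
  constructor
  · intro h; exact mcs_closed hΔ (.mp (.box5 _) (.prem h))
  · intro h; exact mcs_closed hΔ (.mp (.boxT _) (.prem h))

lemma diaEq {Δ Δ' : Set (Fml m)} (hΔ : MCS n m Δ) (hΔ' : MCS n m Δ')
    (h : ∀ ψ, Fml.box ψ ∈ Δ ↔ Fml.box ψ ∈ Δ') (φ : Fml m) :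
    Fml.dia φ ∈ Δ ↔ Fml.dia φ ∈ Δ' := by
  rw [mcs_dia_iff_box_dia hΔ, mcs_dia_iff_box_dia hΔ', h]

lemma canRel_refl {Δ : Set (Fml m)} (hΔ : MCS n m Δ) (i : Fin m) : canRel i Δ Δ :=
  fun ψ h => mcs_closed hΔ (.mp (.agT i ψ) (.prem h))

lemma canRel_symm {Δ Δ' : Set (Fml m)} (hΔ : MCS n m Δ) (hΔ' : MCS n m Δ')
    {i : Fin m} (h : canRel i Δ Δ') : canRel i Δ' Δ := by
  intro ψ hψ
  by_contra hn
  have h1 : ψ.negF ∈ Δ := (mcs_neg_iff hΔ).mpr hn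
  have h2 : Fml.ag i (Fml.dag i ψ.negF) ∈ Δ :=
    mcs_closed hΔ (.mp (b_ag i ψ.negF) (.prem h1))
  have h3 : Fml.dag i ψ.negF ∈ Δ' := h _ h2
  exact mcs_not_both hΔ' hψ h3

lemma canRel_trans {Δ1 Δ2 Δ3 : Set (Fml m)} (hΔ1 : MCS n m Δ1)
    {i : Fin m} (h12 : canRel i Δ1 Δ2) (h23 : canRel i Δ2 Δ3) : canRel i Δ1 Δ3 := by
  intro ψ hψ
  exact h23 _ (h12 _ (mcs_closed hΔ1 (.mp (four_ag i ψ) (.prem hψ))))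

/-! ### Existence lemmas -/

lemma diaExistence {Δ : Set (Fml m)} (hΔ : MCS n m Δ) {φ : Fml m}
    (h : Fml.dia φ ∈ Δ) : ∃ Δ', MCS n m Δ' ∧ canBox Δ Δ' ∧ φ ∈ Δ' := by
  have hcon : Con n m (insert φ {ψ | Fml.box ψ ∈ Δ}) := by
    intro hbot
    have h1 : Hderiv n m {ψ | Fml.box ψ ∈ Δ} φ.negF := neg_of_incon hbot
    obtain ⟨L, hL, hd⟩ := compact h1
    have h2 : Hderiv n m ∅ (impsF L φ.negF) := hd_of_list hd
    have h3 := boxLift h2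
    have h4 : Hderiv n m Δ (Fml.box φ.negF) := by
      refine hd_apply (weaken h3 (Set.empty_subset _)) ?_
      intro χ hχ
      obtain ⟨χ', hχ', rfl⟩ := List.mem_map.mp hχ
      exact .prem (hL χ' hχ')
    exact hΔ.1 (mp_pair _ (.prem h) h4)
  obtain ⟨Δ', hsub, hΔ'⟩ := lindenbaum hcon
  exact ⟨Δ', hΔ', fun ψ hψ => hsub (Set.mem_insert_of_mem _ hψ),
    hsub (Set.mem_insert _ _)⟩

lemma dagExistence {Δ : Set (Fml m)} (hΔ : MCS n m Δ) {i : Fin m} {φ : Fml m}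
    (h : Fml.dag i φ ∈ Δ) : ∃ Δ', MCS n m Δ' ∧ canRel i Δ Δ' ∧ φ ∈ Δ' := by
  have hcon : Con n m (insert φ {ψ | Fml.ag i ψ ∈ Δ}) := by
    intro hbot
    have h1 : Hderiv n m {ψ | Fml.ag i ψ ∈ Δ} φ.negF := neg_of_incon hbot
    obtain ⟨L, hL, hd⟩ := compact h1
    have h2 : Hderiv n m ∅ (impsF L φ.negF) := hd_of_list hd
    have h3 := agLift i h2
    have h4 : Hderiv n m Δ (Fml.ag i φ.negF) := by
      refine hd_apply (weaken h3 (Set.empty_subset _)) ?_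
      intro χ hχ
      obtain ⟨χ', hχ', rfl⟩ := List.mem_map.mp hχ
      exact .prem (hL χ' hχ')
    exact hΔ.1 (mp_pair _ (.prem h) h4)
  obtain ⟨Δ', hsub, hΔ'⟩ := lindenbaum hcon
  exact ⟨Δ', hΔ', fun ψ hψ => hsub (Set.mem_insert_of_mem _ hψ),
    hsub (Set.mem_insert _ _)⟩

/-! ### Finite conjunctions as lists -/

/-- A trivially provable formula. -/
def topF {m : ℕ} : Fml m := (Fml.pos 0).impF (Fml.pos 0)

/-- Conjunction of a list of formulas. -/
def conjList {m : ℕ} (L : List (Fml m)) : Fml m := L.foldr Fml.and topF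

lemma conjList_elim {Γ : Set (Fml m)} {L : List (Fml m)} {χ : Fml m} (hχ : χ ∈ L) :
    Hderiv n m Γ ((conjList L).impF χ) := by
  induction L with
  | nil => simp at hχ
  | cons a L ih =>
    rcases List.mem_cons.mp hχ with h | h
    · subst h; exact andElimL _ _
    · exact hs (andElimR _ _) (ih h)

lemma mcs_ag_conjList {Δ : Set (Fml m)} (hΔ : MCS n m Δ) {i : Fin m}
    {L : List (Fml m)} (h : ∀ χ ∈ L, Fml.ag i χ ∈ Δ) :
    Fml.ag i (conjList L) ∈ Δ := by
  induction L with
  | nil =>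
    exact mcs_thm hΔ (.mp (.bridge i _) (.nec (imp_self' _)))
  | cons a L ih =>
    have ha : Fml.ag i a ∈ Δ := h a (by simp)
    have hc : Fml.ag i (conjList L) ∈ Δ := ih (fun χ hχ => h χ (by simp [hχ]))
    have h1 : Hderiv n m Δ ((Fml.ag i a).impF (Fml.ag i ((conjList L).impF
        (Fml.and a (conjList L))))) := necK_ag i (andIntro _ _)
    have h2 : Fml.ag i ((conjList L).impF (Fml.and a (conjList L))) ∈ Δ :=
      mcs_closed hΔ (.mp h1 (.prem ha))
    exact mcs_mp hΔ (mcs_mp hΔ (mcs_thm hΔ (.agK i _ _)) h2) hc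

lemma mcs_conjUpTo {Δ : Set (Fml m)} (hΔ : MCS n m Δ) {f : ℕ → Fml m} {k : ℕ}
    (h : ∀ j ≤ k, f j ∈ Δ) : conjUpTo f k ∈ Δ := by
  induction k with
  | zero => exact h 0 le_rfl
  | succ k ih =>
    exact (mcs_and_iff hΔ).mpr ⟨ih (fun j hj => h j (hj.trans (Nat.le_succ _))),
      h (k+1) le_rfl⟩

lemma hd_conjUpTo_elim {Γ : Set (Fml m)} {f : ℕ → Fml m} {k : ℕ}
    (h : Hderiv n m Γ (conjUpTo f k)) : ∀ j ≤ k, Hderiv n m Γ (f j) := by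
  induction k with
  | zero =>
    intro j hj; interval_cases j; exact h
  | succ k ih =>
    intro j hj
    rcases Nat.lt_or_ge j (k+1) with h' | h'
    · exact ih (.mp (andElimL _ _) h) j (Nat.lt_succ_iff.mp h')
    · have : j = k + 1 := le_antisymm hj h'
      subst this
      exact .mp (andElimR _ _) h

lemma mcs_disjUpTo_elim {Δ : Set (Fml m)} (hΔ : MCS n m Δ) {f : ℕ → Fml m} {k : ℕ}
    (h : disjUpTo f k ∈ Δ) : ∃ j ≤ k, f j ∈ Δ := by
  induction k with
  | zero => exact ⟨0, le_rfl, h⟩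
  | succ k ih =>
    rcases (mcs_or_iff hΔ).mp h with h' | h'
    · obtain ⟨j, hj, hf⟩ := ih h'
      exact ⟨j, hj.trans (Nat.le_succ _), hf⟩
    · exact ⟨k+1, le_rfl, h'⟩

lemma mcs_prefNegConj {Δ : Set (Fml m)} (hΔ : MCS n m Δ) {f : ℕ → Fml m} {j : ℕ}
    {base : Fml m} (hneg : ∀ l < j, (f l).negF ∈ Δ) (hbase : base ∈ Δ) :
    prefNegConj f j base ∈ Δ := by
  induction j generalizing base with
  | zero => exact hbase
  | succ j ih =>
    show prefNegConj f j (Fml.and (f j).negF base) ∈ Δ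
    exact ih (fun l hl => hneg l (hl.trans (Nat.lt_succ_self _)))
      ((mcs_and_iff hΔ).mpr ⟨hneg j (Nat.lt_succ_self _), hbase⟩)

/-! ### IOA for the canonical model -/

open Classical in
lemma ioaExistence (hm : 1 ≤ m) (u : Fin m → Set (Fml m))
    (hu : ∀ i, MCS n m (u i))
    (hshare : ∀ i j ψ, Fml.box ψ ∈ u i ↔ Fml.box ψ ∈ u j) :
    ∃ v, MCS n m v ∧ ∀ i, canRel i (u i) v := by
  set X : Set (Fml m) := ⋃ i, {ψ | Fml.ag i ψ ∈ u i} with hX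
  have hcon : Con n m X := by
    intro hbot
    obtain ⟨L, hL, hd⟩ := compact hbot
    -- group the premises by agent
    set χi : Fin m → Fml m := fun i => conjList (L.filter (fun χ => Fml.ag i χ ∈ u i))
      with hχi
    have hag : ∀ i, Fml.ag i (χi i) ∈ u i := by
      intro i
      apply mcs_ag_conjList (hu i)
      intro χ hχ
      exact (List.mem_filter.mp hχ).2 |> of_decide_eq_true
    set i0 : Fin m := ⟨0, hm⟩ with hi0
    set Θ := u i0 with hΘ
    have hΘm : MCS n m Θ := hu i0
    have hdia : ∀ i : Fin m, Fml.dia (Fml.ag i (χi i)) ∈ Θ := by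
      intro i
      have h1 : Fml.dia (Fml.ag i (χi i)) ∈ u i :=
        mcs_closed (hu i) (.mp (tdual_box _) (.prem (hag i)))
      exact (diaEq (hu i) (hu i0) (fun ψ => hshare i i0 ψ) _).mp h1
    have hante : conjUpTo (diaAgIdx χi) (m-1) ∈ Θ := by
      apply mcs_conjUpTo hΘm
      intro j hj
      have hjm : j < m := lt_of_le_of_lt hj (Nat.sub_lt hm Nat.one_pos)
      show diaAgIdx χi j ∈ Θ
      rw [diaAgIdx, dif_pos hjm]
      exact hdia ⟨j, hjm⟩
    have hconc : Fml.dia (conjUpTo (agIdx χi) (m-1)) ∈ Θ :=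
      mcs_mp hΘm (mcs_closed hΘm (.ioa χi)) hante
    -- but the conjunction of the [i]'s implies bot
    set A : Fml m := conjUpTo (agIdx χi) (m-1) with hA
    have hAelim : ∀ χ ∈ L, Hderiv n m {A} χ := by
      intro χ hχ
      have hχX : χ ∈ X := hL χ hχ
      obtain ⟨i, hi⟩ := Set.mem_iUnion.mp hχX
      have hiv : (i : Fin m).val ≤ m - 1 := Nat.le_sub_one_of_lt i.isLt
      have hAd : Hderiv n m {A} A := .prem rfl
      have h1 : Hderiv n m {A} (agIdx χi i.val) :=
        hd_conjUpTo_elim hAd i.val hiv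
      rw [agIdx, dif_pos i.isLt] at h1
      have h2 : Hderiv n m {A} (χi ⟨i.val, i.isLt⟩) := .mp (.agT _ _) h1
      rw [Fin.eta] at h2
      refine .mp (conjList_elim ?_) h2
      exact List.mem_filter.mpr ⟨hχ, decide_eq_true hi⟩
    have hAbot : Hderiv n m {A} botF := by
      refine cutSet (weaken hd ?_) hAelim
      intro χ hχ; exact hχ
    have h5 : Hderiv n m ∅ (A.impF botF) := by
      have : ({A} : Set (Fml m)) = insert A ∅ := by simp
      rw [this] at hAbot
      exact deduction hAbot
    have h6 : Hderiv n m ∅ A.negF := .mp (contrap h5) not_bot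
    have h7 : Fml.box A.negF ∈ Θ := mcs_thm hΘm (.nec h6)
    exact mcs_not_both hΘm hconc h7
  obtain ⟨v, hsub, hv⟩ := lindenbaum hcon
  refine ⟨v, hv, fun i ψ hψ => hsub ?_⟩
  exact Set.mem_iUnion.mpr ⟨i, hψ⟩

/-! ### APC for the canonical model -/

open Classical in
lemma apcCond (hn : 0 < n) (i : Fin m) (Δs : Fin (n+1) → Set (Fml m))
    (hM : ∀ k, MCS n m (Δs k))
    (hshare : ∀ k l ψ, Fml.box ψ ∈ Δs k ↔ Fml.box ψ ∈ Δs l) :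
    ∃ k j : Fin (n+1), k < j ∧ canRel i (Δs k) (Δs j) := by
  by_contra hc
  push_neg at hc
  have hex : ∀ k j : Fin (n+1), ∃ ψ : Fml m,
      k < j → Fml.ag i ψ ∈ Δs k ∧ ψ.negF ∈ Δs j := by
    intro k j
    by_cases hkj : k < j
    · have hnc := hc k j hkj
      rw [canRel] at hnc; push_neg at hnc
      obtain ⟨ψ, h1, h2⟩ := hnc
      exact ⟨ψ, fun _ => ⟨h1, (mcs_neg_iff (hM j)).mpr h2⟩⟩
    · exact ⟨topF, fun h' => absurd h' hkj⟩
  choose ψf hψ using hex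
  set ψ' : ℕ → ℕ → Fml m := fun k j =>
    if h : k < n+1 ∧ j < n+1 then ψf ⟨k, h.1⟩ ⟨j, h.2⟩ else topF with hψ'
  set Lk : ℕ → List (Fml m) := fun k =>
    ((List.range (n+1)).filter (fun j => decide (k < j))).map (ψ' k) with hLk
  set g : ℕ → Fml m := fun k => conjList (Lk k) with hg
  have hψ'val : ∀ (k j : Fin (n+1)), ψ' k.val j.val = ψf k j := by
    intro k j
    simp only [hψ']
    rw [dif_pos ⟨k.isLt, j.isLt⟩]
  have ha : ∀ k : Fin (n+1), Fml.ag i (g k.val) ∈ Δs k := by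
    intro k
    apply mcs_ag_conjList (hM k)
    intro χ hχ
    obtain ⟨j, hj, rfl⟩ := List.mem_map.mp hχ
    have hj' := List.mem_filter.mp hj
    have hjr : j < n + 1 := List.mem_range.mp hj'.1
    have hkj : k.val < j := of_decide_eq_true hj'.2
    have := hψ'val k ⟨j, hjr⟩
    rw [this]
    exact (hψ k ⟨j, hjr⟩ (by exact hkj)).1
  have hb : ∀ k l : Fin (n+1), k < l → (g k.val).negF ∈ Δs l := by
    intro k l hkl
    have hmem : ψ' k.val l.val ∈ Lk k.val := by
      apply List.mem_map.mpr
      refine ⟨l.val, List.mem_filter.mpr ⟨List.mem_range.mpr l.isLt, decide_eq_true hkl⟩, rfl⟩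
    have hneg : (ψ' k.val l.val).negF ∈ Δs l := by
      rw [hψ'val k l]
      exact (hψ k l hkl).2
    exact mcs_closed (hM l) (.mp (contrap (conjList_elim hmem)) (.prem hneg))
  set lastF : Fin (n+1) := ⟨n, Nat.lt_succ_self _⟩ with hlast
  set Θ := Δs lastF with hΘ
  have hΘm : MCS n m Θ := hM lastF
  have hante : apcAnte i g (n-1) ∈ Θ := by
    apply mcs_conjUpTo hΘm
    intro j hj
    have hjn : j < n := lt_of_le_of_lt hj (Nat.sub_lt hn Nat.one_pos)
    set jF : Fin (n+1) := ⟨j, by omega⟩ with hjF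
    have hinner : prefNegConj g j (Fml.ag i (g j)) ∈ Δs jF := by
      apply mcs_prefNegConj (hM jF)
      · intro l hl
        have := hb ⟨l, by omega⟩ jF (by simp [Fin.lt_def, hjF]; omega)
        exact this
      · exact ha jF
    have hdia : Fml.dia (prefNegConj g j (Fml.ag i (g j))) ∈ Δs jF :=
      mcs_closed (hM jF) (.mp (tdual_box _) (.prem hinner))
    exact (diaEq (hM jF) hΘm (hshare jF lastF) _).mp hdia
  have hdisj : disjUpTo g (n-1) ∈ Θ :=
    mcs_mp hΘm (mcs_closed hΘm (.apc hn i g)) hante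
  obtain ⟨k, hk, hgk⟩ := mcs_disjUpTo_elim hΘm hdisj
  have hkn : k < n := by omega
  have := hb ⟨k, by omega⟩ lastF (by simp [Fin.lt_def, hlast]; omega)
  exact mcs_not_both hΘm hgk this

/-! ### The canonical model -/

/-- Worlds of the canonical model based at `Δ₀`. -/
def CW (n m : ℕ) (Δ₀ : Set (Fml m)) : Type :=
  {Δ : Set (Fml m) // MCS n m Δ ∧ ∀ ψ, Fml.box ψ ∈ Δ ↔ Fml.box ψ ∈ Δ₀}

/-- The canonical model. -/
def canModel (n m : ℕ) (hm : 1 ≤ m) (Δ₀ : Set (Fml m)) (hΔ₀ : MCS n m Δ₀) :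
    ModelOn n m (CW n m Δ₀) where
  nonemp := ⟨⟨Δ₀, hΔ₀, fun _ => Iff.rfl⟩⟩
  rel i Δ Δ' := canRel i Δ.1 Δ'.1
  refl i Δ := canRel_refl Δ.2.1 i
  symm i w u h := canRel_symm w.2.1 u.2.1 h
  trans i w u v h1 h2 := canRel_trans w.2.1 h1 h2
  ioa u := by
    obtain ⟨v, hv, hrel⟩ := ioaExistence hm (fun i => (u i).1) (fun i => (u i).2.1)
      (fun i j ψ => ((u i).2.2 ψ).trans ((u j).2.2 ψ).symm)
    refine ⟨⟨v, hv, ?_⟩, fun i => hrel i⟩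
    intro ψ
    have i0 : Fin m := ⟨0, hm⟩
    exact ((agBoxEq (u ⟨0, hm⟩).2.1 hv (hrel ⟨0, hm⟩) ψ).symm).trans
      ((u ⟨0, hm⟩).2.2 ψ)
  apc hn i w := by
    obtain ⟨k, j, hkj, hrel⟩ := apcCond hn i (fun k => (w k).1) (fun k => (w k).2.1)
      (fun k l ψ => ((w k).2.2 ψ).trans ((w l).2.2 ψ).symm)
    exact ⟨k, j, hkj, hrel⟩
  val p := {Δ : CW n m Δ₀ | Fml.pos p ∈ Δ.1}

lemma truthLemma (hm : 1 ≤ m) (Δ₀ : Set (Fml m)) (hΔ₀ : MCS n m Δ₀)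
    (φ : Fml m) : ∀ Δ : CW n m Δ₀, Sat (canModel n m hm Δ₀ hΔ₀) Δ φ ↔ φ ∈ Δ.1 := by
  induction φ with
  | pos p => intro Δ; exact Iff.rfl
  | neg p =>
    intro Δ
    constructor
    · intro h
      have := (mcs_neg_iff (φ := Fml.pos p) Δ.2.1).mpr h
      exact this
    · intro h
      have h' : (Fml.pos p).negF ∈ Δ.1 := h
      exact (mcs_neg_iff Δ.2.1).mp h'
  | and φ ψ ihφ ihψ =>
    intro Δ
    show Sat _ Δ φ ∧ Sat _ Δ ψ ↔ _
    rw [ihφ, ihψ, mcs_and_iff Δ.2.1]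
  | or φ ψ ihφ ihψ =>
    intro Δ
    show Sat _ Δ φ ∨ Sat _ Δ ψ ↔ _
    rw [ihφ, ihψ, mcs_or_iff Δ.2.1]
  | box φ ih =>
    intro Δ
    constructor
    · intro hsat
      by_contra hnb
      have h0 : (Fml.box φ).negF ∈ Δ.1 := (mcs_neg_iff Δ.2.1).mpr hnb
      have hdia : Fml.dia φ.negF ∈ Δ.1 := h0
      obtain ⟨Δ', hΔ', hcb, hφn⟩ := diaExistence Δ.2.1 hdia
      have hW : ∀ ψ, Fml.box ψ ∈ Δ' ↔ Fml.box ψ ∈ Δ₀ :=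
        fun ψ => ((boxEq Δ.2.1 hΔ' hcb ψ).symm).trans (Δ.2.2 ψ)
      have hs := hsat ⟨Δ', hΔ', hW⟩
      replace hs := (ih _).mp hs
      exact mcs_not_both hΔ' hs hφn
    · intro hb u
      rw [ih]
      have h1 : Fml.box φ ∈ u.1 := (u.2.2 φ).mpr ((Δ.2.2 φ).mp hb)
      exact mcs_closed u.2.1 (.mp (.boxT φ) (.prem h1))
  | dia φ ih =>
    intro Δ
    constructor
    · rintro ⟨u, hu⟩
      rw [ih] at hu
      have h1 : Fml.dia φ ∈ u.1 := mcs_closed u.2.1 (.mp (tdual_box φ) (.prem hu))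
      exact (diaEq u.2.1 Δ.2.1 (fun ψ => (u.2.2 ψ).trans ((Δ.2.2 ψ).symm)) φ).mp h1
    · intro h
      obtain ⟨Δ', hΔ', hcb, hφ'⟩ := diaExistence Δ.2.1 h
      have hW : ∀ ψ, Fml.box ψ ∈ Δ' ↔ Fml.box ψ ∈ Δ₀ :=
        fun ψ => ((boxEq Δ.2.1 hΔ' hcb ψ).symm).trans (Δ.2.2 ψ)
      exact ⟨⟨Δ', hΔ', hW⟩, (ih _).mpr hφ'⟩
  | ag i φ ih =>
    intro Δ
    constructor
    · intro hsat
      by_contra hnb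
      have h0 : (Fml.ag i φ).negF ∈ Δ.1 := (mcs_neg_iff Δ.2.1).mpr hnb
      have hdag : Fml.dag i φ.negF ∈ Δ.1 := h0
      obtain ⟨Δ', hΔ', hcr, hφn⟩ := dagExistence Δ.2.1 hdag
      have hW : ∀ ψ, Fml.box ψ ∈ Δ' ↔ Fml.box ψ ∈ Δ₀ :=
        fun ψ => ((agBoxEq Δ.2.1 hΔ' hcr ψ).symm).trans (Δ.2.2 ψ)
      have hs := hsat ⟨Δ', hΔ', hW⟩ hcr
      replace hs := (ih _).mp hs
      exact mcs_not_both hΔ' hs hφn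
    · intro hb u hrel
      rw [ih]
      exact hrel φ hb
  | dag i φ ih =>
    intro Δ
    constructor
    · rintro ⟨u, hrel, hu⟩
      rw [ih] at hu
      by_contra hnb
      have h0 : (Fml.dag i φ).negF ∈ Δ.1 := (mcs_neg_iff Δ.2.1).mpr hnb
      have h1 : Fml.ag i φ.negF ∈ Δ.1 := h0
      exact mcs_not_both u.2.1 hu (hrel φ.negF h1)
    · intro h
      obtain ⟨Δ', hΔ', hcr, hφ'⟩ := dagExistence Δ.2.1 h
      have hW : ∀ ψ, Fml.box ψ ∈ Δ' ↔ Fml.box ψ ∈ Δ₀ :=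
        fun ψ => ((agBoxEq Δ.2.1 hΔ' hcr ψ).symm).trans (Δ.2.2 ψ)
      exact ⟨⟨Δ', hΔ', hW⟩, hcr, (ih _).mpr hφ'⟩

lemma completeness (hm : 1 ≤ m) {Γ : Set (Fml m)} {φ : Fml m}
    (h : SemConseq n m Γ φ) : Hderiv n m Γ φ := by
  by_contra hnd
  have hcon : Con n m (insert φ.negF Γ) := fun hbot => hnd (of_incon_neg hbot)
  obtain ⟨Δ₀, hsub, hΔ₀⟩ := lindenbaum hcon
  set M := canModel n m hm Δ₀ hΔ₀ with hM
  set w : CW n m Δ₀ := ⟨Δ₀, hΔ₀, fun _ => Iff.rfl⟩ with hw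
  have hΓ : ∀ ψ ∈ Γ, Sat M w ψ := fun ψ hψ =>
    (truthLemma hm Δ₀ hΔ₀ ψ w).mpr (hsub (Set.mem_insert_of_mem _ hψ))
  have hφ : Sat M w φ := h _ M w hΓ
  have hmem : φ ∈ Δ₀ := (truthLemma hm Δ₀ hΔ₀ φ w).mp hφ
  exact mcs_not_both hΔ₀ hmem (hsub (Set.mem_insert _ _))

/-! ### Soundness -/

section Soundness

variable {W : Type} {M : ModelOn n m W}

lemma sat_negF : ∀ (φ : Fml m) (w : W), Sat M w φ.negF ↔ ¬ Sat M w φ := by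
  intro φ
  induction φ with
  | pos p => intro w; exact Iff.rfl
  | neg p => intro w; show Sat M w (Fml.pos p) ↔ ¬ (w ∉ M.val p); rw [not_not]; rfl
  | and φ ψ ihφ ihψ =>
    intro w
    show Sat M w φ.negF ∨ Sat M w ψ.negF ↔ ¬ (Sat M w φ ∧ Sat M w ψ)
    rw [ihφ, ihψ]; tauto
  | or φ ψ ihφ ihψ =>
    intro w
    show Sat M w φ.negF ∧ Sat M w ψ.negF ↔ ¬ (Sat M w φ ∨ Sat M w ψ)
    rw [ihφ, ihψ]; tauto
  | box φ ih =>
    intro w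
    show (∃ u, Sat M u φ.negF) ↔ ¬ ∀ u, Sat M u φ
    simp only [ih]
    exact not_forall.symm
  | dia φ ih =>
    intro w
    show (∀ u, Sat M u φ.negF) ↔ ¬ ∃ u, Sat M u φ
    simp only [ih]
    exact not_exists.symm
  | ag i φ ih =>
    intro w
    show (∃ u, M.rel i w u ∧ Sat M u φ.negF) ↔ ¬ ∀ u, M.rel i w u → Sat M u φ
    simp only [ih]
    constructor
    · rintro ⟨u, hr, hn⟩ hall; exact hn (hall u hr)
    · intro h
      by_contra hc
      push_neg at hc
      exact h hc
  | dag i φ ih =>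
    intro w
    show (∀ u, M.rel i w u → Sat M u φ.negF) ↔ ¬ ∃ u, M.rel i w u ∧ Sat M u φ
    simp only [ih]
    constructor
    · rintro h ⟨u, hr, hu⟩; exact h u hr hu
    · intro h u hr hu; exact h ⟨u, hr, hu⟩

lemma sat_impF {φ ψ : Fml m} {w : W} :
    Sat M w (φ.impF ψ) ↔ (Sat M w φ → Sat M w ψ) := by
  show Sat M w φ.negF ∨ Sat M w ψ ↔ _
  rw [sat_negF]; tauto

lemma sat_conjUpTo {f : ℕ → Fml m} {k : ℕ} {w : W} :
    Sat M w (conjUpTo f k) ↔ ∀ j ≤ k, Sat M w (f j) := by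
  induction k with
  | zero =>
    constructor
    · intro h j hj; rw [Nat.le_zero.mp hj]; exact h
    · intro h; exact h 0 le_rfl
  | succ k ih =>
    show Sat M w (conjUpTo f k) ∧ Sat M w (f (k+1)) ↔ _
    rw [ih]
    constructor
    · rintro ⟨h1, h2⟩ j hj
      rcases Nat.lt_or_ge j (k+1) with h | h
      · exact h1 j (Nat.lt_succ_iff.mp h)
      · rw [le_antisymm hj h]; exact h2
    · intro h
      exact ⟨fun j hj => h j (hj.trans (Nat.le_succ _)), h (k+1) le_rfl⟩

lemma sat_disjUpTo {f : ℕ → Fml m} {k : ℕ} {w : W} :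
    Sat M w (disjUpTo f k) ↔ ∃ j ≤ k, Sat M w (f j) := by
  induction k with
  | zero =>
    constructor
    · intro h; exact ⟨0, le_rfl, h⟩
    · rintro ⟨j, hj, h⟩; rw [Nat.le_zero.mp hj] at h; exact h
  | succ k ih =>
    show Sat M w (disjUpTo f k) ∨ Sat M w (f (k+1)) ↔ _
    rw [ih]
    constructor
    · rintro (⟨j, hj, h⟩ | h)
      · exact ⟨j, hj.trans (Nat.le_succ _), h⟩
      · exact ⟨k+1, le_rfl, h⟩
    · rintro ⟨j, hj, h⟩
      rcases Nat.lt_or_ge j (k+1) with h' | h'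
      · exact Or.inl ⟨j, Nat.lt_succ_iff.mp h', h⟩
      · rw [le_antisymm hj h'] at h; exact Or.inr h

lemma sat_prefNegConj {f : ℕ → Fml m} {j : ℕ} {base : Fml m} {w : W} :
    Sat M w (prefNegConj f j base) ↔ (∀ l < j, ¬ Sat M w (f l)) ∧ Sat M w base := by
  induction j generalizing base with
  | zero =>
    constructor
    · intro h; exact ⟨fun l hl => absurd hl (Nat.not_lt_zero l), h⟩
    · exact fun h => h.2
  | succ j ih =>
    show Sat M w (prefNegConj f j (Fml.and (f j).negF base)) ↔ _
    rw [ih]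
    have : Sat M w (Fml.and (f j).negF base) ↔ ¬ Sat M w (f j) ∧ Sat M w base := by
      show Sat M w (f j).negF ∧ Sat M w base ↔ _
      rw [sat_negF]
    rw [this]
    constructor
    · rintro ⟨h1, h2, h3⟩
      refine ⟨fun l hl => ?_, h3⟩
      rcases Nat.lt_or_ge l j with h | h
      · exact h1 l h
      · rw [le_antisymm (Nat.lt_succ_iff.mp hl) h]; exact h2
    · rintro ⟨h1, h2⟩
      exact ⟨fun l hl => h1 l (hl.trans (Nat.lt_succ_self _)),
        h1 j (Nat.lt_succ_self _), h2⟩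

lemma ioa_valid (hm : 1 ≤ m) (f : Fin m → Fml m) (w : W) :
    Sat M w (ioaAx f) := by
  show Sat M w ((conjUpTo (diaAgIdx f) (m-1)).impF (Fml.dia (conjUpTo (agIdx f) (m-1))))
  rw [sat_impF]
  intro hante
  have h1 := sat_conjUpTo.mp hante
  have h2 : ∀ i : Fin m, ∃ u, ∀ v, M.rel i u v → Sat M v (f i) := by
    intro i
    have := h1 i.val (Nat.le_sub_one_of_lt i.isLt)
    unfold diaAgIdx at this
    rw [dif_pos i.isLt] at this
    simp only [Fin.eta] at this
    exact this
  choose u hu using h2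
  obtain ⟨v, hv⟩ := M.ioa u
  refine ⟨v, sat_conjUpTo.mpr ?_⟩
  intro j hj
  have hjm : j < m := lt_of_le_of_lt hj (Nat.sub_lt hm Nat.one_pos)
  unfold agIdx
  rw [dif_pos hjm]
  intro v' hvv'
  exact hu ⟨j, hjm⟩ v' (M.trans _ _ _ _ (hv ⟨j, hjm⟩) hvv')

lemma apc_valid (hn : 0 < n) (i : Fin m) (f : ℕ → Fml m) (w : W) :
    Sat M w (apcAx i f (n-1)) := by
  show Sat M w ((apcAnte i f (n-1)).impF (disjUpTo f (n-1)))
  rw [sat_impF]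
  intro hante
  by_contra hconc
  have hdis : ∀ j ≤ n-1, ¬ Sat M w (f j) := by
    intro j hj hs
    exact hconc (sat_disjUpTo.mpr ⟨j, hj, hs⟩)
  have h1 := sat_conjUpTo.mp hante
  have h2 : ∀ j : ℕ, ∃ u, j ≤ n-1 → Sat M u (prefNegConj f j (Fml.ag i (f j))) := by
    intro j
    by_cases hj : j ≤ n-1
    · obtain ⟨u, hu⟩ := h1 j hj
      exact ⟨u, fun _ => hu⟩
    · exact ⟨w, fun h => absurd h hj⟩
  choose u hu using h2
  set v : Fin (n+1) → W := fun t => if t.val < n then u t.val else w with hvdef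
  obtain ⟨k, j, hkj, hrel⟩ := M.apc hn i v
  have hjn : j.val ≤ n := Nat.lt_succ_iff.mp j.isLt
  have hkn : k.val < n := lt_of_lt_of_le hkj hjn
  have hkn1 : k.val ≤ n - 1 := Nat.le_sub_one_of_lt hkn
  have hvk : v k = u k.val := by simp [hvdef, hkn]
  have hk := sat_prefNegConj.mp (hu k.val hkn1)
  rcases Nat.lt_or_ge j.val n with hjlt | hjge
  · have hvj : v j = u j.val := by simp [hvdef, hjlt]
    have hj' := sat_prefNegConj.mp (hu j.val (Nat.le_sub_one_of_lt hjlt))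
    have hsat : Sat M (u j.val) (f k.val) := by
      have := hk.2
      rw [hvk, hvj] at hrel
      exact this _ hrel
    exact hj'.1 k.val hkj hsat
  · have hjeq : j.val = n := le_antisymm hjn hjge
    have hvj : v j = w := by simp [hvdef, hjeq]
    have hsat : Sat M w (f k.val) := by
      have := hk.2
      rw [hvk, hvj] at hrel
      exact this _ hrel
    exact hdis k.val hkn1 hsat

end Soundness

lemma soundness (hm : 1 ≤ m) {Γ : Set (Fml m)} {φ : Fml m}
    (h : Hderiv n m Γ φ) : SemConseq n m Γ φ := by
  induction h with
  | prem h => exact fun W M w hΓ => hΓ _ h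
  | ax1 φ ψ =>
    intro W M w hΓ
    rw [sat_impF]; intro h1
    rw [sat_impF]; intro _
    exact h1
  | ax2 φ ψ χ =>
    intro W M w hΓ
    simp only [sat_impF]
    intro h1 h2 h3
    exact h1 h3 (h2 h3)
  | ax3 φ ψ =>
    intro W M w hΓ
    simp only [sat_impF, sat_negF]
    intro h1 h2
    by_contra hc
    exact (h1 hc) h2
  | boxK φ ψ =>
    intro W M w hΓ
    simp only [sat_impF]
    intro h1 h2 u
    exact sat_impF.mp (h1 u) (h2 u)
  | boxT φ =>
    intro W M w hΓ
    rw [sat_impF]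
    exact fun h => h w
  | box5 φ =>
    intro W M w hΓ
    rw [sat_impF]
    rintro ⟨u, hu⟩ v
    exact ⟨u, hu⟩
  | boxDual φ =>
    intro W M w hΓ
    show (∀ u, Sat M u φ) ∨ (∃ u, Sat M u φ.negF)
    by_cases h : ∀ u, Sat M u φ
    · exact Or.inl h
    · right
      obtain ⟨u, hu⟩ := not_forall.mp h
      exact ⟨u, (sat_negF φ u).mpr hu⟩
  | agK i φ ψ =>
    intro W M w hΓ
    simp only [sat_impF]
    intro h1 h2 u hr
    exact sat_impF.mp (h1 u hr) (h2 u hr)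
  | agT i φ =>
    intro W M w hΓ
    rw [sat_impF]
    exact fun h => h w (M.refl i w)
  | ag5 i φ =>
    intro W M w hΓ
    rw [sat_impF]
    rintro ⟨u, hru, hu⟩ v hrv
    exact ⟨u, M.trans i v w u (M.symm i w v hrv) hru, hu⟩
  | agDual i φ =>
    intro W M w hΓ
    show (∀ u, M.rel i w u → Sat M u φ) ∨ (∃ u, M.rel i w u ∧ Sat M u φ.negF)
    by_cases h : ∀ u, M.rel i w u → Sat M u φ
    · exact Or.inl h
    · right
      push_neg at h
      obtain ⟨u, hru, hu⟩ := h
      exact ⟨u, hru, (sat_negF φ u).mpr hu⟩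
  | bridge i φ =>
    intro W M w hΓ
    rw [sat_impF]
    exact fun h u _ => h u
  | ioa f =>
    intro W M w hΓ
    exact ioa_valid hm f w
  | apc hn i f =>
    intro W M w hΓ
    exact apc_valid hn i f w
  | mp _ _ ih1 ih2 =>
    intro W M w hΓ
    exact sat_impF.mp (ih1 W M w hΓ) (ih2 W M w hΓ)
  | nec _ ih =>
    intro W M w hΓ
    exact fun u => ih W M u (fun ψ hψ => absurd hψ (Set.notMem_empty ψ))

end Hilbert

/-- For all `n, m ∈ ℕ` with `m ≥ 1`, every set `Γ` of `L^m`-formulas and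
every `φ ∈ L^m`: `Γ ⊢_{Ldm_n^m} φ` iff `Γ ⊩ φ`. -/
theorem hilbert_soundness_completeness (n m : ℕ) (hm : 1 ≤ m)
    (Γ : Set (Fml m)) (φ : Fml m) :
    Hderiv n m Γ φ ↔ SemConseq n m Γ φ :=
  ⟨soundness hm, completeness hm⟩

end Stit
end

section
/- Variable substitution is height-preserving admissible in G3Ldm_n^m: if a labelled sequent Λ has a G3Ldm_n^m-derivation of height h, then for any labels x, y, the sequent Λ(y/x), obtained from Λ by replacing every occurrence of the label x by y, has a G3Ldm_n^m-derivation of height at most h. -/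
namespace Stit

lemma substLab_self (x y : ℕ) : substLab x y x = y := if_pos rfl

lemma substLab_of_ne {x v : ℕ} (y : ℕ) (h : v ≠ x) : substLab x y v = v := if_neg h

lemma substLab_ne {x y l v : ℕ} (hvy : v ≠ y) (hl : l ≠ v) : substLab x y l ≠ v := by
  unfold substLab; split
  · exact fun h => hvy h.symm
  · exact hl

lemma substF_cons {m : ℕ} (x y w : ℕ) (φ : Fml m) (Γ : LFmls m) :
    substF x y ((w, φ) ::ₘ Γ) = (substLab x y w, φ) ::ₘ substF x y Γ :=
  Multiset.map_cons _ _ _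

lemma substR_cons {m : ℕ} (x y : ℕ) (i : Fin m) (a b : ℕ) (R : RAtoms m) :
    substR x y (((i, a, b) : RAtom m) ::ₘ R) =
      ((i, substLab x y a, substLab x y b) : RAtom m) ::ₘ substR x y R :=
  Multiset.map_cons _ _ _

lemma substR_add {m : ℕ} (x y : ℕ) (A B : RAtoms m) :
    substR x y (A + B) = substR x y A + substR x y B := Multiset.map_add _ _ _

lemma substR_of_fresh {m : ℕ} {x : ℕ} (y : ℕ) {R : RAtoms m}
    (h : ∀ a ∈ R, a.2.1 ≠ x ∧ a.2.2 ≠ x) : substR x y R = R := by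
  refine Eq.trans (Multiset.map_congr rfl fun a ha => ?_) (Multiset.map_id R)
  obtain ⟨h1, h2⟩ := h a ha
  simp [substLab, h1, h2]

lemma substF_of_fresh {m : ℕ} {x : ℕ} (y : ℕ) {Γ : LFmls m}
    (h : ∀ e ∈ Γ, e.1 ≠ x) : substF x y Γ = Γ := by
  refine Eq.trans (Multiset.map_congr rfl fun e he => ?_) (Multiset.map_id Γ)
  simp [substLab, h e he]

lemma substR_ioaAtoms {m : ℕ} (x y : ℕ) (u : Fin m → ℕ) (v : ℕ) :
    substR x y (ioaAtoms u v) =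
      ioaAtoms (fun i => substLab x y (u i)) (substLab x y v) := by
  simp only [substR, ioaAtoms, Multiset.map_coe, List.map_map]
  rfl

lemma freshIn_subst_of_fresh {m : ℕ} {v x y : ℕ} {R : RAtoms m} {Γ : LFmls m}
    (hvy : v ≠ y) (hf : freshIn v R Γ) :
    freshIn v (substR x y R) (substF x y Γ) := by
  obtain ⟨h1, h2⟩ := hf
  constructor
  · intro a ha
    simp only [substR, Multiset.mem_map] at ha
    obtain ⟨b, hb, rfl⟩ := ha
    exact ⟨substLab_ne hvy (h1 b hb).1, substLab_ne hvy (h1 b hb).2⟩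
  · intro e he
    simp only [substF, Multiset.mem_map] at he
    obtain ⟨b, hb, rfl⟩ := he
    exact substLab_ne hvy (h2 b hb)

lemma exists_fresh {m : ℕ} (R : RAtoms m) (Γ : LFmls m) (x y : ℕ) :
    ∃ v' : ℕ, v' ≠ x ∧ v' ≠ y ∧ freshIn v' R Γ ∧
      freshIn v' (substR x y R) (substF x y Γ) := by
  set S : Multiset ℕ :=
    x ::ₘ y ::ₘ (R.map (·.2.1) + R.map (·.2.2) + Γ.map (·.1)) with hS
  have key : ∀ a ∈ S, a ≠ S.sup + 1 := fun a ha h => by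
    have := Multiset.le_sup ha; omega
  have hfresh : freshIn (S.sup + 1) R Γ := by
    constructor
    · intro a ha
      constructor
      · refine key _ ?_
        simp only [hS]
        exact Multiset.mem_cons_of_mem (Multiset.mem_cons_of_mem
          (Multiset.mem_add.2 (Or.inl (Multiset.mem_add.2 (Or.inl
            (Multiset.mem_map_of_mem _ ha))))))
      · refine key _ ?_
        simp only [hS]
        exact Multiset.mem_cons_of_mem (Multiset.mem_cons_of_mem
          (Multiset.mem_add.2 (Or.inl (Multiset.mem_add.2 (Or.inr
            (Multiset.mem_map_of_mem _ ha))))))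
    · intro e he
      refine key _ ?_
      simp only [hS]
      exact Multiset.mem_cons_of_mem (Multiset.mem_cons_of_mem
        (Multiset.mem_add.2 (Or.inr (Multiset.mem_map_of_mem _ he))))
  have hvx : S.sup + 1 ≠ x := Ne.symm (key x (by simp [hS]))
  have hvy : S.sup + 1 ≠ y := Ne.symm (key y (by simp [hS]))
  -- note freshIn requires labels ≠ v; our hfresh has v ≠ label direction? check
  exact ⟨S.sup + 1, hvx, hvy, hfresh, freshIn_subst_of_fresh hvy hfresh⟩

lemma subst_aux (n m : ℕ) : ∀ (h : ℕ) (R : RAtoms m) (Γ : LFmls m) (x y : ℕ),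
    SeqH G3flags n m h R Γ → SeqH G3flags n m h (substR x y R) (substF x y Γ) := by
  intro h
  induction h using Nat.strong_induction_on with
  | _ h IH =>
    intro R Γ x y hd
    cases hd with
    | id w p =>
        rw [substF_cons, substF_cons]
        exact SeqH.id _ _
    | andR p1 p2 =>
        rename_i h0 Γ0 w φ ψ
        have q1 := IH h0 (Nat.lt_succ_self _) _ _ x y p1
        have q2 := IH h0 (Nat.lt_succ_self _) _ _ x y p2
        rw [substF_cons, substF_cons] at q1 q2
        rw [substF_cons]
        exact SeqH.andR q1 q2
    | orR p1 =>
        rename_i h0 Γ0 w φ ψ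
        have q1 := IH h0 (Nat.lt_succ_self _) _ _ x y p1
        rw [substF_cons, substF_cons, substF_cons] at q1
        rw [substF_cons]
        exact SeqH.orR q1
    | boxR hv p =>
        rename_i h0 Γ0 w v φ
        obtain ⟨v', hvx, hvy, hf, hf'⟩ := exists_fresh R ((w, Fml.box φ) ::ₘ Γ0) x y
        obtain ⟨hfR, hfΓ⟩ := hv
        have hwv : w ≠ v := hfΓ (w, Fml.box φ) (Multiset.mem_cons_self _ _)
        have hΓv : ∀ e ∈ Γ0, e.1 ≠ v := fun e he => hfΓ e (Multiset.mem_cons_of_mem he)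
        have q1 := IH h0 (Nat.lt_succ_self _) _ _ v v' p
        rw [substR_of_fresh v' hfR, substF_cons, substF_cons,
            substF_of_fresh v' hΓv, substLab_of_ne v' hwv, substLab_self] at q1
        have q2 := IH h0 (Nat.lt_succ_self _) _ _ x y q1
        rw [substF_cons, substF_cons, substLab_of_ne y hvx] at q2
        rw [substF_cons] at hf' ⊢
        exact SeqH.boxR hf' q2
    | diaR p =>
        rename_i h0 Γ0 w u φ
        have q1 := IH h0 (Nat.lt_succ_self _) _ _ x y p
        rw [substF_cons, substF_cons] at q1
        rw [substF_cons]
        exact SeqH.diaR q1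
    | agR hfl hv p =>
        rename_i h0 Γ0 w v i φ
        obtain ⟨v', hvx, hvy, hf, hf'⟩ := exists_fresh R ((w, Fml.ag i φ) ::ₘ Γ0) x y
        obtain ⟨hfR, hfΓ⟩ := hv
        have hwv : w ≠ v := hfΓ (w, Fml.ag i φ) (Multiset.mem_cons_self _ _)
        have hΓv : ∀ e ∈ Γ0, e.1 ≠ v := fun e he => hfΓ e (Multiset.mem_cons_of_mem he)
        have q1 := IH h0 (Nat.lt_succ_self _) _ _ v v' p
        rw [substR_cons, substR_of_fresh v' hfR, substF_cons,
            substF_of_fresh v' hΓv, substLab_of_ne v' hwv, substLab_self] at q1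
        have q2 := IH h0 (Nat.lt_succ_self _) _ _ x y q1
        rw [substR_cons, substF_cons, substLab_of_ne y hvx] at q2
        rw [substF_cons] at hf' ⊢
        exact SeqH.agR rfl hf' q2
    | agRKeep hfl =>
        simp [G3flags] at hfl
    | dagR hfl p =>
        rename_i h0 R0 Γ0 w u i φ
        have q1 := IH h0 (Nat.lt_succ_self _) _ _ x y p
        rw [substR_cons, substF_cons, substF_cons] at q1
        rw [substR_cons, substF_cons]
        exact SeqH.dagR rfl q1
    | reflR hfl p =>
        rename_i h0 i w
        have q1 := IH h0 (Nat.lt_succ_self _) _ _ x y p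
        rw [substR_cons] at q1
        exact SeqH.reflR rfl q1
    | euclR hfl p =>
        rename_i h0 R0 i w u v
        have q1 := IH h0 (Nat.lt_succ_self _) _ _ x y p
        rw [substR_cons, substR_cons, substR_cons] at q1
        rw [substR_cons, substR_cons]
        exact SeqH.euclR rfl q1
    | ioaR hfl u v hv p =>
        rename_i h0
        obtain ⟨v', hvx, hvy, hf, hf'⟩ := exists_fresh R Γ x y
        obtain ⟨hfR, hfΓ⟩ := hv
        have q1 := IH h0 (Nat.lt_succ_self _) _ _ v v' p
        rw [substR_add, substR_of_fresh v' hfR, substF_of_fresh v' hfΓ,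
            substR_ioaAtoms, substLab_self] at q1
        have q2 := IH h0 (Nat.lt_succ_self _) _ _ x y q1
        rw [substR_add, substR_ioaAtoms, substLab_of_ne y hvx] at q2
        exact SeqH.ioaR rfl _ v' hf' q2
    | apcR hn i w hp =>
        rename_i h0
        refine SeqH.apcR hn i (fun k => substLab x y (w k)) fun k j hkj => ?_
        have q1 := IH h0 (Nat.lt_succ_self _) _ _ x y (hp k j hkj)
        rw [substR_cons] at q1
        exact q1
    | prR hfl _ _ =>
        simp [G3flags] at hfl

/-- Variable substitution is height-preserving admissible in `G3Ldm_n^m`: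
if `R, Γ` has a derivation of height (at most) `h`, then so does the sequent obtained by
replacing every occurrence of the label `x` by `y`. -/
theorem g3_substitution_hp_admissible (n m : ℕ) (hm : 1 ≤ m)
    (h : ℕ) (R : RAtoms m) (Γ : LFmls m) (x y : ℕ)
    (hd : SeqH G3flags n m h R Γ) :
    SeqH G3flags n m h (substR x y R) (substF x y Γ) := by
  exact subst_aux n m h R Γ x y hd

end Stit
end
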